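/- arXiv:0810.5728 — 2 statements merged into one kernel-verified Lean document; each statement's English description precedes it below -/
import Mathlib

section
/- Let M be an MDP with target sets F_1,…,F_k, F = ∪_i F_i, every state of F absorbing, α an initial distribution on V∖F, and let σ be a memoryless strategy such that Pr^σ_v(◇F) > 0 for every state v. Then the expected-visits vector y' defined by y'_{(v,γ)} = Σ_{v'∈V∖F} α(v') Σ_{n=0}^∞ (P^σ)^n_{v',v} σ(v)(γ) for v ∈ V∖F, γ ∈ Γ_v, and y'_v = Σ_{v'∈V∖F} Σ_{γ'∈Γ_{v'}} p_{(v',γ',v)} y'_{(v',γ')} for v ∈ F, is well defined (all entries are finite), and y' is a feasible solution of the multi-objective LP associated with (M, α, F_1,…,F_k). -/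
open scoped BigOperators
open MeasureTheory

/-- A finite-state Markov decision process: a finite set of states `V`, a finite
action alphabet `A`, a nonempty set of enabled actions at each state, and for each
state and enabled action a probability distribution on next states. -/
structure MDP (V A : Type) [Fintype V] [Fintype A] where
  enabled : V → Finset A
  enabled_nonempty : ∀ v, (enabled v).Nonempty
  p : V → A → V → ℝ
  p_nonneg : ∀ v a v', 0 ≤ p v a v'
  p_sum : ∀ v, ∀ a ∈ enabled v, ∑ v', p v a v' = 1

namespace MDP

variable {V A : Type} [Fintype V] [Fintype A]

/-- A (history-dependent, randomized) strategy: given the list of past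
(state, action) pairs (most recent first) and the current state, a probability
distribution on actions, supported on the enabled actions. -/
structure Strategy (M : MDP V A) where
  act : List (V × A) → V → A → ℝ
  act_nonneg : ∀ h v a, 0 ≤ act h v a
  act_support : ∀ h v a, a ∉ M.enabled v → act h v a = 0
  act_sum : ∀ h v, ∑ a, act h v a = 1

/-- A strategy is memoryless (stationary) if it depends only on the current state. -/
def Strategy.Memoryless {M : MDP V A} (σ : M.Strategy) : Prop :=
  ∀ h h' v, σ.act h v = σ.act h' v

/-- A strategy is pure (deterministic) if it always plays a single action with
probability 1. -/
def Strategy.Pure {M : MDP V A} (σ : M.Strategy) : Prop :=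
  ∀ h v, ∃ a, σ.act h v a = 1

/-- `α` is a probability distribution on `V`. -/
def IsDist (α : V → ℝ) : Prop :=
  (∀ v, 0 ≤ α v) ∧ ∑ v, α v = 1

/-- The point (Dirac) distribution at `u`. -/
def diracD [DecidableEq V] (u : V) : V → ℝ := fun v => if v = u then 1 else 0

/-- The `m`-th binary digit of `x`. -/
noncomputable def bit (m : ℕ) (x : ℝ) : ℝ :=
  if ⌊x * 2 ^ (m + 1)⌋ % 2 = 1 then 1 else 0

/-- Extracts from a single seed `x ∈ [0,1]` a sequence of independent uniform
`[0,1]` samples, by splitting the binary digits of `x`. -/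
noncomputable def unif (k : ℕ) (x : ℝ) : ℝ :=
  ∑' n : ℕ, bit (Nat.pair k n) x / 2 ^ (n + 1)

/-- Inverse-CDF sampling from a distribution `q` on a finite type, using the
uniform sample `u`. -/
noncomputable def sample {S : Type} [Fintype S] [Nonempty S] (q : S → ℝ) (u : ℝ) : S :=
  let e := Fintype.equivFin S
  if h : (Finset.univ.filter fun i => u < ∑ j ∈ Finset.Iic i, q (e.symm j)).Nonempty then
    e.symm ((Finset.univ.filter fun i => u < ∑ j ∈ Finset.Iic i, q (e.symm j)).min' h)
  else Classical.arbitrary S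

variable [Nonempty V] [Nonempty A]

/-- The random run of `M` under strategy `σ` from initial distribution `α`, driven by
the random seed `x`: at time `n` it returns the list of past (state, action) pairs
(most recent first) together with the current state and the action chosen there. -/
noncomputable def run (M : MDP V A) (σ : M.Strategy) (α : V → ℝ) (x : ℝ) :
    ℕ → List (V × A) × (V × A)
  | 0 =>
      let s := sample α (unif 0 x)
      ([], (s, sample (σ.act [] s) (unif 1 x)))
  | n + 1 =>
      let r := run M σ α x n
      let s' := sample (M.p r.2.1 r.2.2) (unif (2 * n + 2) x)
      (r.2 :: r.1, (s', sample (σ.act (r.2 :: r.1) s') (unif (2 * n + 3) x)))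

/-- The state at time `n` of the run driven by seed `x`. -/
noncomputable def stateAt (M : MDP V A) (σ : M.Strategy) (α : V → ℝ) (x : ℝ) (n : ℕ) : V :=
  (M.run σ α x n).2.1

/-- The probability, under strategy `σ` from initial distribution `α`, that the
infinite trajectory of states belongs to the event `E`. -/
noncomputable def PrEvent (M : MDP V A) (σ : M.Strategy) (α : V → ℝ) (E : Set (ℕ → V)) : ℝ :=
  (volume {x : ℝ | x ∈ Set.Icc (0 : ℝ) 1 ∧ M.stateAt σ α x ∈ E}).toReal

/-- The probability of eventually visiting the set `F` (the event `◇F`). -/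
noncomputable def PrReach (M : MDP V A) (σ : M.Strategy) (α : V → ℝ) (F : Set V) : ℝ :=
  M.PrEvent σ α {w | ∃ n, w n ∈ F}

/-- A state is absorbing if it has a single enabled action, which loops on it with
probability 1. -/
def Absorbing (M : MDP V A) (v : V) : Prop :=
  ∃ a, M.enabled v = {a} ∧ M.p v a v = 1

/-- One positive-probability step of the underlying graph of the MDP. -/
def Step (M : MDP V A) (v v' : V) : Prop :=
  ∃ a ∈ M.enabled v, 0 < M.p v a v'

/-- The MDP is cleaned-up w.r.t. `F`: from every state there is a path of
positive-probability transitions reaching `F`. -/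
def CleanedUp (M : MDP V A) (F : Set V) : Prop :=
  ∀ v, ∃ w ∈ F, Relation.ReflTransGen M.Step v w

end MDP

namespace MDP

variable {V A : Type} [Fintype V] [Fintype A]

/-- Feasibility for the multi-objective LP associated with `(M, α, F)`:
`y` are the variables `y_{(v,γ)}` (for `v ∉ F`), `yF` the variables `y_v` (for `v ∈ F`). -/
def LPFeasible [DecidableEq V] (M : MDP V A) (α : V → ℝ) (F : Finset V)
    (y : V → A → ℝ) (yF : V → ℝ) : Prop :=
  (∀ v ∉ F, (∑ a ∈ M.enabled v, y v a) -
      (∑ v' ∈ Fᶜ, ∑ a' ∈ M.enabled v', M.p v' a' v * y v' a') = α v) ∧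
  (∀ v ∈ F, yF v - (∑ v' ∈ Fᶜ, ∑ a' ∈ M.enabled v', M.p v' a' v * y v' a') = 0) ∧
  (∀ v ∈ F, 0 ≤ yF v) ∧
  (∀ v ∉ F, ∀ a ∈ M.enabled v, 0 ≤ y v a)

/-- The substochastic matrix `P^σ` on `V ∖ F` induced by a memoryless strategy `σ`. -/
noncomputable def Pmat [DecidableEq V] (M : MDP V A) (σ : M.Strategy) (F : Finset V) :
    Matrix {v : V // v ∉ F} {v : V // v ∉ F} ℝ :=
  Matrix.of fun v v' => ∑ a ∈ M.enabled v.1, σ.act [] v.1 a * M.p v.1 a v'.1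

end MDP

namespace MDP

variable {V A : Type} [Fintype V] [Fintype A]

/-- The expected-visits vector: `y'_{(v,γ)} = ∑_{v' ∈ V∖F} α(v') ∑_{n=0}^∞
(P^σ)^n_{v',v} · σ(v)(γ)`, the expected number of visits to `v ∉ F` at which
action `γ` is chosen, under the memoryless strategy `σ` started from `α`. -/
noncomputable def yvisit [DecidableEq V] (M : MDP V A) (σ : M.Strategy) (F : Finset V)
    (α : V → ℝ) (v : V) (a : A) : ℝ :=
  if h : v ∈ F then 0
  else ∑ v' : {w : V // w ∉ F},
    α v'.1 * ∑' n : ℕ, (M.Pmat σ F ^ n) v' ⟨v, h⟩ * σ.act [] v a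

/-- The induced values `y'_v = ∑_{v' ∈ V∖F} ∑_{γ'} p_{(v',γ',v)} y'_{(v',γ')}`
for `v ∈ F`. -/
noncomputable def yvisitF [DecidableEq V] (M : MDP V A) (σ : M.Strategy) (F : Finset V)
    (α : V → ℝ) (v : V) : ℝ :=
  ∑ v' ∈ Fᶜ, ∑ a' ∈ M.enabled v', M.p v' a' v * M.yvisit σ F α v' a'

end MDP

namespace Aux
open MDP


def cell (L : ℕ) (a : ℤ) : Set ℝ := Set.Ico ((a : ℝ)/2^L) ((a+1)/2^L)

lemma mem_cell_iff {L : ℕ} {a : ℤ} {x : ℝ} :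
    x ∈ cell L a ↔ (a : ℝ) ≤ x * 2 ^ L ∧ x * 2 ^ L < a + 1 := by
  have h2 : (0:ℝ) < 2 ^ L := by positivity
  simp only [cell, Set.mem_Ico, div_le_iff₀ h2, lt_div_iff₀ h2]

lemma floor_of_mem_cell {L : ℕ} {b : ℤ} {x : ℝ} (hx : x ∈ cell L b) :
    ⌊x * 2 ^ L⌋ = b := by
  rw [mem_cell_iff] at hx
  rw [Int.floor_eq_iff]
  exact ⟨hx.1, by exact_mod_cast hx.2⟩

lemma bit_of_mem_cell {m : ℕ} {b : ℤ} {x : ℝ} (hx : x ∈ cell (m+1) b) :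
    MDP.bit m x = if b % 2 = 1 then 1 else 0 := by
  rw [MDP.bit, floor_of_mem_cell hx]

lemma mem_cell_floor {L : ℕ} {x : ℝ} : x ∈ cell L ⌊x * 2^L⌋ := by
  rw [mem_cell_iff]
  exact ⟨Int.floor_le _, Int.lt_floor_add_one _⟩

lemma volume_cell (L : ℕ) (a : ℤ) : volume (cell L a) = 2⁻¹ ^ L := by
  rw [cell, Real.volume_Ico]
  have h : ((a:ℝ)+1)/2^L - (a:ℝ)/2^L = (2⁻¹:ℝ)^L := by rw [← sub_div, add_sub_cancel_left, one_div, inv_pow]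
  rw [h, ENNReal.ofReal_pow (by norm_num)]
  congr 1
  rw [show (2⁻¹:ℝ) = 1/2 by norm_num, ENNReal.ofReal_div_of_pos (by norm_num)]
  simp

lemma dyadic_meas (N : ℕ) : ∀ (m : ℕ → ℕ), StrictMono m → ∀ (L : ℕ) (a : ℤ), L ≤ m 0 →
    volume {x : ℝ | x ∈ cell L a ∧ ∀ n < N, MDP.bit (m n) x = 1} ≤ 2⁻¹ ^ (L + N) := by
  induction N with
  | zero =>
    intro m hm L a _
    have hset : {x : ℝ | x ∈ cell L a ∧ ∀ n < 0, MDP.bit (m n) x = 1} = cell L a := by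
      ext x; simp
    rw [hset, volume_cell]; simp
  | succ N ih =>
    intro m hm L a hL
    set Mv := m 0 with hMv
    have hK1 : 1 ≤ Mv + 1 - L := by omega
    set K := Mv + 1 - L with hKdef
    have hKL : L + K = Mv + 1 := by omega
    have hm1 : Mv + 1 ≤ m 1 := by
      have := hm (show 0 < 1 by norm_num); omega
    have h2K : (2:ℤ)^K = 2 * 2^(K-1) := by
      conv_lhs => rw [show K = (K-1)+1 by omega]
      rw [pow_succ]; ring
    have heven : a * 2^K = 2 * (a * 2^(K-1)) := by rw [h2K]; ring
    have hmul : (a+1) * 2^K = a * 2^K + 2^K := by ring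
    have hcast : ((2^(K-1) : ℕ) : ℤ) = 2^(K-1) := by push_cast; ring
    have hsub : {x : ℝ | x ∈ cell L a ∧ ∀ n < N+1, MDP.bit (m n) x = 1} ⊆
        ⋃ i ∈ Finset.range (2^(K-1)),
          {x : ℝ | x ∈ cell (Mv+1) (a*2^K + 2*(i:ℤ)+1) ∧ ∀ n < N, MDP.bit (m (n+1)) x = 1} := by
      rintro x ⟨hx, hbit⟩
      set b := ⌊x * 2^(Mv+1)⌋ with hb
      have hxb : x ∈ cell (Mv+1) b := mem_cell_floor
      rw [mem_cell_iff] at hx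
      have hpow : (2:ℝ)^(Mv+1) = 2^L * 2^K := by rw [← pow_add, hKL]
      have hb1 : a * 2^K ≤ b := by
        rw [hb, Int.le_floor]
        push_cast
        calc ((a:ℝ) * 2^K) ≤ (x * 2^L) * 2^K := by
              apply mul_le_mul_of_nonneg_right hx.1 (by positivity)
        _ = x * 2^(Mv+1) := by rw [hpow]; ring
      have hb2 : b < (a+1) * 2^K := by
        rw [hb, Int.floor_lt]
        push_cast
        calc x * 2^(Mv+1) = (x * 2^L) * 2^K := by rw [hpow]; ring
        _ < ((a:ℝ)+1) * 2^K := by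
            apply mul_lt_mul_of_pos_right hx.2 (by positivity)
      have hodd : b % 2 = 1 := by
        have h0 := hbit 0 (by omega)
        rw [bit_of_mem_cell hxb] at h0
        by_contra hc
        rw [if_neg hc] at h0
        norm_num at h0
      simp only [Set.mem_iUnion, exists_prop, Finset.mem_range, Set.mem_setOf_eq]
      refine ⟨((b - a*2^K)/2).toNat, by omega, ?_, fun n hn => hbit (n+1) (by omega)⟩
      have hidx : a*2^K + 2*(((b - a*2^K)/2).toNat : ℤ)+1 = b := by omega
      rw [hidx]; exact hxb
    calc volume {x : ℝ | x ∈ cell L a ∧ ∀ n < N+1, MDP.bit (m n) x = 1}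
        ≤ volume (⋃ i ∈ Finset.range (2^(K-1)),
          {x : ℝ | x ∈ cell (Mv+1) (a*2^K + 2*(i:ℤ)+1) ∧ ∀ n < N, MDP.bit (m (n+1)) x = 1}) :=
          measure_mono hsub
      _ ≤ ∑ i ∈ Finset.range (2^(K-1)),
          volume {x : ℝ | x ∈ cell (Mv+1) (a*2^K + 2*(i:ℤ)+1) ∧ ∀ n < N, MDP.bit (m (n+1)) x = 1} :=
          measure_biUnion_finset_le _ _
      _ ≤ ∑ _i ∈ Finset.range (2^(K-1)), 2⁻¹ ^ (Mv+1+N) := by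
          apply Finset.sum_le_sum
          intro i _
          exact ih (fun n => m (n+1)) (fun x y hxy => hm (by omega)) (Mv+1) _ hm1
      _ = 2^(K-1) * 2⁻¹ ^ (Mv+1+N) := by
          rw [Finset.sum_const, Finset.card_range]; simp [mul_comm]
      _ = 2⁻¹ ^ (L + (N+1)) := by
          have hexp : Mv+1+N = (K-1) + (L + (N+1)) := by omega
          rw [hexp, pow_add, ← mul_assoc, ← ENNReal.inv_pow,
            ENNReal.mul_inv_cancel (by positivity) (by simp), one_mul]


lemma bit_nonneg (m : ℕ) (x : ℝ) : 0 ≤ MDP.bit m x := by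
  rw [MDP.bit]; split <;> norm_num

lemma bit_le_one (m : ℕ) (x : ℝ) : MDP.bit m x ≤ 1 := by
  rw [MDP.bit]; split <;> norm_num

lemma term_le (k : ℕ) (x : ℝ) (n : ℕ) :
    MDP.bit (Nat.pair k n) x / 2 ^ (n+1) ≤ (1:ℝ) / 2 / 2 ^ n := by
  have h : (1:ℝ)/2/2^n = 1/2^(n+1) := by rw [pow_succ]; ring
  rw [h]
  gcongr
  exact bit_le_one _ _

lemma term_nonneg (k : ℕ) (x : ℝ) (n : ℕ) :
    0 ≤ MDP.bit (Nat.pair k n) x / 2 ^ (n+1) :=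
  div_nonneg (bit_nonneg _ _) (by positivity)

lemma summable_unif_terms (k : ℕ) (x : ℝ) :
    Summable (fun n : ℕ => MDP.bit (Nat.pair k n) x / 2 ^ (n+1)) :=
  Summable.of_nonneg_of_le (term_nonneg k x) (term_le k x) (summable_geometric_two' 1)

lemma unif_nonneg (k : ℕ) (x : ℝ) : 0 ≤ unif k x :=
  tsum_nonneg (term_nonneg k x)

lemma unif_le_one (k : ℕ) (x : ℝ) : unif k x ≤ 1 := by
  rw [MDP.unif, show (1:ℝ) = ∑' n : ℕ, (1:ℝ)/2/2^n from (tsum_geometric_two' 1).symm]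
  exact Summable.tsum_le_tsum (term_le k x) (summable_unif_terms k x) (summable_geometric_two' 1)

lemma bits_one_of_unif_eq_one {k : ℕ} {x : ℝ} (h : unif k x = 1) (n₀ : ℕ) :
    MDP.bit (Nat.pair k n₀) x = 1 := by
  by_contra hb
  have h0 : MDP.bit (Nat.pair k n₀) x = 0 := by
    rw [MDP.bit] at hb ⊢
    split at hb
    · simp_all
    · simp_all
  have hlt : unif k x < 1 := by
    rw [MDP.unif, show (1:ℝ) = ∑' n : ℕ, (1:ℝ)/2/2^n from (tsum_geometric_two' 1).symm]
    apply Summable.tsum_lt_tsum_of_nonneg (term_nonneg k x) (term_le k x) (i := n₀) ?_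
      (summable_geometric_two' 1)
    rw [h0, zero_div]
    positivity
  linarith

lemma bad_measure_zero (k : ℕ) :
    volume {x : ℝ | x ∈ Set.Icc (0:ℝ) 1 ∧ unif k x = 1} = 0 := by
  set B := {x : ℝ | x ∈ Set.Icc (0:ℝ) 1 ∧ unif k x = 1} with hB
  have key : ∀ N : ℕ, volume B ≤ 2⁻¹ ^ N := by
    intro N
    have hsub : B ⊆ {x : ℝ | x ∈ cell 0 0 ∧ ∀ n < N, MDP.bit (Nat.pair k n) x = 1} ∪ {1} := by
      rintro x ⟨⟨hx0, hx1⟩, hu⟩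
      rcases lt_or_eq_of_le hx1 with hx1' | hx1'
      · left
        refine ⟨mem_cell_iff.mpr ?_, fun n _ => bits_one_of_unif_eq_one hu n⟩
        push_cast
        constructor <;> simp <;> linarith
      · right; simp [hx1']
    calc volume B ≤ volume ({x : ℝ | x ∈ cell 0 0 ∧ ∀ n < N, MDP.bit (Nat.pair k n) x = 1} ∪ {1}) :=
          measure_mono hsub
      _ ≤ volume {x : ℝ | x ∈ cell 0 0 ∧ ∀ n < N, MDP.bit (Nat.pair k n) x = 1} + volume {(1:ℝ)} :=
          measure_union_le _ _
      _ ≤ 2⁻¹ ^ (0 + N) + 0 := by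
          apply add_le_add
          · exact dyadic_meas N (fun n => Nat.pair k n)
              (fun a b hab => Nat.pair_lt_pair_right k hab) 0 0 (Nat.zero_le _)
          · simp [Real.volume_singleton]
      _ = 2⁻¹ ^ N := by simp
  by_contra h
  obtain ⟨N, hN⟩ := ENNReal.exists_inv_two_pow_lt h
  exact absurd (key N) (not_le.mpr hN)

lemma sample_pos {S : Type} [Fintype S] [Nonempty S] (q : S → ℝ) (hq : ∀ s, 0 ≤ q s)
    (hsum : ∑ s, q s = 1) {u : ℝ} (h0 : 0 ≤ u) (h1 : u < 1) : 0 < q (MDP.sample q u) := by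
  classical
  set e := Fintype.equivFin S with he
  set Fs := (Finset.univ.filter fun i => u < ∑ j ∈ Finset.Iic i, q (e.symm j)) with hFs
  have hcard : 0 < Fintype.card S := Fintype.card_pos
  have htop : (⟨Fintype.card S - 1, by omega⟩ : Fin (Fintype.card S)) ∈ Fs := by
    rw [hFs, Finset.mem_filter]
    refine ⟨Finset.mem_univ _, ?_⟩
    have hIic : Finset.Iic (⟨Fintype.card S - 1, by omega⟩ : Fin (Fintype.card S)) =
        Finset.univ := by
      ext j
      simp only [Finset.mem_Iic, Finset.mem_univ, iff_true, Fin.le_def]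
      omega
    rw [hIic, Equiv.sum_comp e.symm q, hsum]
    exact h1
  have hne : Fs.Nonempty := ⟨_, htop⟩
  have hsample : MDP.sample q u = e.symm (Fs.min' hne) := by
    rw [MDP.sample]
    simp only [← he, ← hFs]
    rw [dif_pos hne]
  have hmemFs : ∀ i, i ∈ Fs ↔ u < ∑ j ∈ Finset.Iic i, q (e.symm j) := fun i => by
    rw [hFs]; simp
  set i₀ := Fs.min' hne with hi₀
  have hmem : u < ∑ j ∈ Finset.Iic i₀, q (e.symm j) := (hmemFs _).mp (Fs.min'_mem hne)
  have hIio : ∑ j ∈ Finset.Iio i₀, q (e.symm j) ≤ u := by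
    rcases Finset.eq_empty_or_nonempty (Finset.Iio i₀) with hemp | hne'
    · rw [hemp, Finset.sum_empty]; exact h0
    · set j := (Finset.Iio i₀).max' hne' with hj
      have hjlt : j < i₀ := Finset.mem_Iio.mp ((Finset.Iio i₀).max'_mem hne')
      have hjnot : j ∉ Fs := by
        intro hjin
        exact absurd (Fs.min'_le j hjin) (not_le.mpr hjlt)
      have hjle : ∑ l ∈ Finset.Iic j, q (e.symm l) ≤ u := by
        by_contra hcon
        exact hjnot ((hmemFs j).mpr (not_le.mp hcon))
      refine le_trans (Finset.sum_le_sum_of_subset_of_nonneg ?_ fun l _ _ => hq _) hjle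
      intro l hl
      exact Finset.mem_Iic.mpr (Finset.le_max' _ l hl)
  have hins : ∑ j ∈ Finset.Iic i₀, q (e.symm j)
      = q (e.symm i₀) + ∑ j ∈ Finset.Iio i₀, q (e.symm j) := by
    rw [← Finset.Iio_insert, Finset.sum_insert (by simp)]
  rw [hsample]
  rw [hins] at hmem
  linarith

variable {V A : Type} [Fintype V] [Fintype A]

def StepS (M : MDP V A) (σ : M.Strategy) (v v' : V) : Prop :=
  ∃ a ∈ M.enabled v, 0 < σ.act [] v a ∧ 0 < M.p v a v'

variable [Nonempty V] [Nonempty A] [DecidableEq V]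

lemma diracD_sum (v0 : V) : ∑ v, diracD v0 v = 1 := by
  simp [diracD]

lemma diracD_nonneg (v0 : V) : ∀ v, 0 ≤ diracD v0 v := by
  intro v; rw [diracD]; split <;> norm_num

lemma run_reachable (M : MDP V A) (σ : M.Strategy) (hσ : σ.Memoryless) (v0 : V) (x : ℝ)
    (hx : ∀ k, unif k x ≠ 1) (n : ℕ) :
    Relation.ReflTransGen (StepS M σ) v0 (M.run σ (diracD v0) x n).2.1 ∧
      0 < σ.act [] (M.run σ (diracD v0) x n).2.1 (M.run σ (diracD v0) x n).2.2 := by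
  have hu0 : ∀ k, 0 ≤ unif k x := fun k => unif_nonneg k x
  have hu1 : ∀ k, unif k x < 1 := fun k => lt_of_le_of_ne (unif_le_one k x) (hx k)
  induction n with
  | zero =>
    simp only [MDP.run]
    have hs : MDP.sample (diracD v0) (unif 0 x) = v0 := by
      have hpos := sample_pos (diracD v0) (diracD_nonneg v0) (diracD_sum v0) (hu0 0) (hu1 0)
      by_contra hne
      rw [diracD, if_neg hne] at hpos
      exact lt_irrefl _ hpos
    rw [hs]
    exact ⟨Relation.ReflTransGen.refl,
      sample_pos _ (σ.act_nonneg [] _) (σ.act_sum [] _) (hu0 1) (hu1 1)⟩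
  | succ n ih =>
    obtain ⟨hreach, hact⟩ := ih
    simp only [MDP.run]
    set r := M.run σ (diracD v0) x n with hr
    have henabled : r.2.2 ∈ M.enabled r.2.1 := by
      by_contra h
      rw [σ.act_support [] _ _ h] at hact
      exact lt_irrefl _ hact
    set s' := MDP.sample (M.p r.2.1 r.2.2) (unif (2*n+2) x) with hs'
    have hp : 0 < M.p r.2.1 r.2.2 s' :=
      sample_pos _ (M.p_nonneg _ _) (M.p_sum _ _ henabled) (hu0 _) (hu1 _)
    have hfun : σ.act (r.2 :: r.1) s' = σ.act [] s' := hσ _ _ _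
    rw [hfun]
    exact ⟨hreach.tail ⟨r.2.2, henabled, hact, hp⟩,
      sample_pos _ (σ.act_nonneg [] _) (σ.act_sum [] _) (hu0 _) (hu1 _)⟩

lemma reach_of_pos (M : MDP V A) (σ : M.Strategy) (hσ : σ.Memoryless) (F : Finset V)
    (v0 : V) (hpos : 0 < M.PrReach σ (diracD v0) (↑F : Set V)) :
    ∃ w ∈ F, Relation.ReflTransGen (StepS M σ) v0 w := by
  by_contra hcon
  push_neg at hcon
  rw [MDP.PrReach, MDP.PrEvent] at hpos
  have hsub : {x : ℝ | x ∈ Set.Icc (0:ℝ) 1 ∧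
        M.stateAt σ (diracD v0) x ∈ {w : ℕ → V | ∃ n, w n ∈ (↑F : Set V)}} ⊆
      ⋃ k : ℕ, {x : ℝ | x ∈ Set.Icc (0:ℝ) 1 ∧ unif k x = 1} := by
    rintro x ⟨hxI, n, hn⟩
    by_contra hxB
    simp only [Set.mem_iUnion, Set.mem_setOf_eq, not_exists, not_and] at hxB
    have hx : ∀ k, unif k x ≠ 1 := fun k => hxB k hxI
    have hreach := (run_reachable M σ hσ v0 x hx n).1
    simp only [MDP.stateAt] at hn
    exact hcon _ (Finset.mem_coe.mp hn) hreach
  have hvol : volume {x : ℝ | x ∈ Set.Icc (0:ℝ) 1 ∧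
      M.stateAt σ (diracD v0) x ∈ {w : ℕ → V | ∃ n, w n ∈ (↑F : Set V)}} = 0 :=
    measure_mono_null hsub (measure_iUnion_null fun k => bad_measure_zero k)
  rw [hvol] at hpos
  simp at hpos

lemma summable_pow_div {c : ℝ} (h0 : 0 ≤ c) (h1 : c < 1) {N : ℕ} (hN : 0 < N) :
    Summable fun m : ℕ => c ^ (m / N) := by
  apply summable_of_sum_range_le (c := N * (1-c)⁻¹) (fun n => pow_nonneg h0 _)
  intro n
  have heq : ∀ n : ℕ, ∑ m ∈ Finset.range (N*n), c^(m/N) = ∑ t ∈ Finset.range n, (N:ℝ) * c^t := by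
    intro n
    induction n with
    | zero => simp
    | succ n ih =>
      rw [Nat.mul_succ, Finset.sum_range_add, ih, Finset.sum_range_succ]
      congr 1
      have : ∀ x ∈ Finset.range N, c ^ ((N*n + x) / N) = c ^ n := by
        intro x hx
        congr 1
        rw [Finset.mem_range] at hx
        rw [add_comm, Nat.add_mul_div_left x n hN, Nat.div_eq_of_lt hx]
        omega
      rw [Finset.sum_congr rfl this, Finset.sum_const, Finset.card_range, nsmul_eq_mul]
  calc ∑ m ∈ Finset.range n, c^(m/N)
      ≤ ∑ m ∈ Finset.range (N*n), c^(m/N) :=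
        Finset.sum_le_sum_of_subset_of_nonneg
          (Finset.range_subset_range.mpr (Nat.le_mul_of_pos_left n hN))
          (fun _ _ _ => pow_nonneg h0 _)
    _ = ∑ t ∈ Finset.range n, (N:ℝ) * c^t := heq n
    _ = (N:ℝ) * ∑ t ∈ Finset.range n, c^t := by rw [Finset.mul_sum]
    _ ≤ (N:ℝ) * (1-c)⁻¹ := by
        apply mul_le_mul_of_nonneg_left _ (Nat.cast_nonneg N)
        rw [← tsum_geometric_of_lt_one h0 h1]
        exact Summable.sum_le_tsum (Finset.range n) (fun i _ => pow_nonneg h0 _)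
          (summable_geometric_of_lt_one h0 h1)

section Mat

variable [DecidableEq V] (M : MDP V A) (σ : M.Strategy) (F : Finset V)

lemma sum_compl_sub (f : V → ℝ) : ∑ v' ∈ Fᶜ, f v' = ∑ v' : {w : V // w ∉ F}, f v'.1 :=
  Finset.sum_subtype Fᶜ (fun x => Finset.mem_compl) f

lemma act_sum_enabled (v : V) : ∑ a ∈ M.enabled v, σ.act [] v a = 1 := by
  rw [← σ.act_sum [] v]
  exact Finset.sum_subset (Finset.subset_univ _)
    (fun a _ ha => σ.act_support [] v a ha)

lemma Pmat_nonneg (v v' : {w : V // w ∉ F}) : 0 ≤ M.Pmat σ F v v' := by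
  simp only [MDP.Pmat, Matrix.of_apply]
  exact Finset.sum_nonneg fun a _ => mul_nonneg (σ.act_nonneg _ _ _) (M.p_nonneg _ _ _)

lemma Pmat_pow_nonneg (n : ℕ) (v v' : {w : V // w ∉ F}) : 0 ≤ (M.Pmat σ F ^ n) v v' := by
  induction n generalizing v v' with
  | zero =>
    rw [pow_zero, Matrix.one_apply]
    split <;> norm_num
  | succ n ih =>
    rw [pow_succ, Matrix.mul_apply]
    exact Finset.sum_nonneg fun u _ => mul_nonneg (ih v u) (Pmat_nonneg M σ F u v')

/-- Row sums of powers of the substochastic matrix. -/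
noncomputable def rrow (n : ℕ) (v : {w : V // w ∉ F}) : ℝ :=
  ∑ v' : {w : V // w ∉ F}, (M.Pmat σ F ^ n) v v'

lemma rrow_nonneg (n : ℕ) (v : {w : V // w ∉ F}) : 0 ≤ rrow M σ F n v :=
  Finset.sum_nonneg fun v' _ => Pmat_pow_nonneg M σ F n v v'

lemma entry_le_rrow (n : ℕ) (v v' : {w : V // w ∉ F}) :
    (M.Pmat σ F ^ n) v v' ≤ rrow M σ F n v :=
  Finset.single_le_sum (fun u _ => Pmat_pow_nonneg M σ F n v u) (Finset.mem_univ v')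

lemma sum_p_sub_le {v : V} {a : A} (ha : a ∈ M.enabled v) :
    ∑ v' : {w : V // w ∉ F}, M.p v a v'.1 ≤ 1 := by
  rw [← sum_compl_sub, ← M.p_sum v a ha]
  exact Finset.sum_le_sum_of_subset_of_nonneg (Finset.subset_univ _)
    (fun u _ _ => M.p_nonneg v a u)

lemma rrow_one_eq (v : {w : V // w ∉ F}) :
    rrow M σ F 1 v = ∑ a ∈ M.enabled v.1, σ.act [] v.1 a *
      ∑ v' : {w : V // w ∉ F}, M.p v.1 a v'.1 := by
  rw [rrow]
  simp only [pow_one, MDP.Pmat, Matrix.of_apply]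
  rw [Finset.sum_comm]
  exact Finset.sum_congr rfl fun a _ => by rw [Finset.mul_sum]

lemma rrow_one_le (v : {w : V // w ∉ F}) : rrow M σ F 1 v ≤ 1 := by
  rw [rrow_one_eq, ← act_sum_enabled M σ v.1]
  apply Finset.sum_le_sum
  intro a ha
  calc σ.act [] v.1 a * ∑ v' : {w : V // w ∉ F}, M.p v.1 a v'.1
      ≤ σ.act [] v.1 a * 1 :=
        mul_le_mul_of_nonneg_left (sum_p_sub_le M F ha) (σ.act_nonneg _ _ _)
    _ = σ.act [] v.1 a := mul_one _

lemma rrow_add (a b : ℕ) (v : {w : V // w ∉ F}) :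
    rrow M σ F (a+b) v = ∑ u : {w : V // w ∉ F}, (M.Pmat σ F ^ a) v u * rrow M σ F b u := by
  simp only [rrow, pow_add, Matrix.mul_apply]
  rw [Finset.sum_comm]
  exact Finset.sum_congr rfl fun u _ => by rw [Finset.mul_sum]

lemma rrow_le_one (n : ℕ) (v : {w : V // w ∉ F}) : rrow M σ F n v ≤ 1 := by
  induction n generalizing v with
  | zero =>
    simp only [rrow, pow_zero, Matrix.one_apply]
    rw [Finset.sum_ite_eq Finset.univ v (fun _ => (1:ℝ))]
    simp
  | succ n ih =>
    rw [show n + 1 = 1 + n by omega, rrow_add]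
    calc ∑ u : {w : V // w ∉ F}, (M.Pmat σ F ^ 1) v u * rrow M σ F n u
        ≤ ∑ u : {w : V // w ∉ F}, (M.Pmat σ F ^ 1) v u * 1 := by
          apply Finset.sum_le_sum
          intro u _
          exact mul_le_mul_of_nonneg_left (ih u) (Pmat_pow_nonneg M σ F 1 v u)
      _ = rrow M σ F 1 v := by simp [rrow]
      _ ≤ 1 := rrow_one_le M σ F v

lemma rrow_succ_le (n : ℕ) (v : {w : V // w ∉ F}) :
    rrow M σ F (n+1) v ≤ rrow M σ F n v := by
  rw [rrow_add]
  calc ∑ u : {w : V // w ∉ F}, (M.Pmat σ F ^ n) v u * rrow M σ F 1 u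
      ≤ ∑ u : {w : V // w ∉ F}, (M.Pmat σ F ^ n) v u * 1 := by
        apply Finset.sum_le_sum
        intro u _
        exact mul_le_mul_of_nonneg_left (rrow_one_le M σ F u) (Pmat_pow_nonneg M σ F n v u)
    _ = rrow M σ F n v := by simp [rrow]

lemma rrow_antitone : ∀ v : {w : V // w ∉ F}, Antitone (fun n => rrow M σ F n v) := fun v =>
  antitone_nat_of_succ_le (fun n => rrow_succ_le M σ F n v)

end Mat

section Mat2
variable [DecidableEq V]

lemma exists_rrow_lt (M : MDP V A) (σ : M.Strategy) (F : Finset V)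
    {w : V} (hw : w ∈ F) :
    ∀ u : V, Relation.ReflTransGen (StepS M σ) u w → ∀ hu : u ∉ F,
      ∃ n, rrow M σ F n ⟨u, hu⟩ < 1 := by
  intro u hrt
  induction hrt using Relation.ReflTransGen.head_induction_on with
  | refl => intro hu; exact absurd hw hu
  | @head u c hstep htail ih =>
    intro hu
    obtain ⟨a₀, ha₀, hs0, hp0⟩ := hstep
    by_cases hc : c ∈ F
    · refine ⟨1, ?_⟩
      rw [rrow_one_eq]
      dsimp only
      have hlt : ∑ a ∈ M.enabled u, σ.act [] u a * ∑ v' : {w' : V // w' ∉ F}, M.p u a v'.1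
          < ∑ a ∈ M.enabled u, σ.act [] u a := by
        apply Finset.sum_lt_sum
        · intro a ha
          calc σ.act [] u a * ∑ v' : {w' : V // w' ∉ F}, M.p u a v'.1
              ≤ σ.act [] u a * 1 :=
                mul_le_mul_of_nonneg_left (sum_p_sub_le M F ha) (σ.act_nonneg _ _ _)
            _ = _ := mul_one _
        · refine ⟨a₀, ha₀, ?_⟩
          have hsub : ∑ v' : {w' : V // w' ∉ F}, M.p u a₀ v'.1 < 1 := by
            have h1 : ∑ v' : {w' : V // w' ∉ F}, M.p u a₀ v'.1
                ≤ ∑ v' ∈ Finset.univ.erase c, M.p u a₀ v' := by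
              rw [← sum_compl_sub F]
              apply Finset.sum_le_sum_of_subset_of_nonneg
              · intro z hz
                rw [Finset.mem_compl] at hz
                exact Finset.mem_erase.mpr ⟨fun h => hz (h ▸ hc), Finset.mem_univ z⟩
              · exact fun z _ _ => M.p_nonneg u a₀ z
            have h2 : ∑ v' ∈ Finset.univ.erase c, M.p u a₀ v'
                = ∑ v', M.p u a₀ v' - M.p u a₀ c := Finset.sum_erase_eq_sub (Finset.mem_univ c)
            rw [M.p_sum u a₀ ha₀] at h2
            linarith
          calc σ.act [] u a₀ * ∑ v' : {w' : V // w' ∉ F}, M.p u a₀ v'.1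
              < σ.act [] u a₀ * 1 := mul_lt_mul_of_pos_left hsub hs0
            _ = _ := mul_one _
      rw [act_sum_enabled M σ u] at hlt
      exact hlt
    · obtain ⟨n, hn⟩ := ih hc
      refine ⟨1 + n, ?_⟩
      rw [rrow_add]
      have hQpos : 0 < (M.Pmat σ F ^ 1) ⟨u, hu⟩ ⟨c, hc⟩ := by
        rw [pow_one]
        simp only [MDP.Pmat, Matrix.of_apply]
        apply Finset.sum_pos' (fun a _ => mul_nonneg (σ.act_nonneg _ _ _) (M.p_nonneg _ _ _))
        exact ⟨a₀, ha₀, mul_pos hs0 hp0⟩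
      calc ∑ x : {w' : V // w' ∉ F}, (M.Pmat σ F ^ 1) ⟨u,hu⟩ x * rrow M σ F n x
          < ∑ x : {w' : V // w' ∉ F}, (M.Pmat σ F ^ 1) ⟨u,hu⟩ x * 1 := by
            apply Finset.sum_lt_sum
            · exact fun x _ => mul_le_mul_of_nonneg_left (rrow_le_one M σ F n x)
                (Pmat_pow_nonneg M σ F 1 _ x)
            · exact ⟨⟨c, hc⟩, Finset.mem_univ _, mul_lt_mul_of_pos_left hn hQpos⟩
        _ = rrow M σ F 1 ⟨u,hu⟩ := by simp [rrow]
        _ ≤ 1 := rrow_one_le M σ F _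

lemma summable_entry (M : MDP V A) (σ : M.Strategy) (F : Finset V)
    (hreach : ∀ v : V, ∃ w ∈ F, Relation.ReflTransGen (StepS M σ) v w)
    (v' v : {w : V // w ∉ F}) : Summable fun n : ℕ => (M.Pmat σ F ^ n) v' v := by
  haveI : Nonempty {w : V // w ∉ F} := ⟨v'⟩
  have hex : ∀ u : {w : V // w ∉ F}, ∃ n, rrow M σ F n u < 1 := by
    intro u
    obtain ⟨w, hw, hrt⟩ := hreach u.1
    have := exists_rrow_lt M σ F hw u.1 hrt u.2
    simpa using this
  choose nv hnv using hex
  set N := Finset.univ.sup nv + 1 with hNdef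
  have hNpos : 0 < N := Nat.succ_pos _
  have hrowN : ∀ u : {w : V // w ∉ F}, rrow M σ F N u < 1 := by
    intro u
    refine lt_of_le_of_lt (rrow_antitone M σ F u ?_) (hnv u)
    have := Finset.le_sup (f := nv) (Finset.mem_univ u)
    omega
  set c := Finset.univ.sup' Finset.univ_nonempty (fun u => rrow M σ F N u) with hcdef
  obtain ⟨u₀, _, hu₀⟩ := Finset.exists_mem_eq_sup' Finset.univ_nonempty
    (fun u => rrow M σ F N u)
  have hc0 : 0 ≤ c := by rw [hcdef, hu₀]; exact rrow_nonneg M σ F N u₀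
  have hc1 : c < 1 := by rw [hcdef, hu₀]; exact hrowN u₀
  have hle : ∀ u : {w : V // w ∉ F}, rrow M σ F N u ≤ c := fun u =>
    Finset.le_sup' _ (Finset.mem_univ u)
  have decay : ∀ (t s : ℕ) (u : {w : V // w ∉ F}), rrow M σ F (N*t + s) u ≤ c ^ t := by
    intro t
    induction t with
    | zero => intro s u; simpa using rrow_le_one M σ F s u
    | succ t ih =>
      intro s u
      have hsplit : N*(t+1) + s = N + (N*t + s) := by ring
      rw [hsplit, rrow_add]
      calc ∑ x : {w' : V // w' ∉ F}, (M.Pmat σ F ^ N) u x * rrow M σ F (N*t + s) x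
          ≤ ∑ x : {w' : V // w' ∉ F}, (M.Pmat σ F ^ N) u x * c ^ t := by
            apply Finset.sum_le_sum
            exact fun x _ => mul_le_mul_of_nonneg_left (ih s x) (Pmat_pow_nonneg M σ F N u x)
        _ = (∑ x : {w' : V // w' ∉ F}, (M.Pmat σ F ^ N) u x) * c ^ t :=
            (Finset.sum_mul _ _ _).symm
        _ = rrow M σ F N u * c ^ t := rfl
        _ ≤ c * c ^ t := mul_le_mul_of_nonneg_right (hle u) (pow_nonneg hc0 t)
        _ = c ^ (t+1) := (pow_succ' c t).symm
  have hbound : ∀ n, (M.Pmat σ F ^ n) v' v ≤ c ^ (n / N) := by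
    intro n
    have hdm : N * (n / N) + n % N = n := Nat.div_add_mod n N
    calc (M.Pmat σ F ^ n) v' v ≤ rrow M σ F n v' := entry_le_rrow M σ F n v' v
      _ = rrow M σ F (N*(n/N) + n%N) v' := by rw [hdm]
      _ ≤ c ^ (n/N) := decay _ _ _
  exact Summable.of_nonneg_of_le (fun n => Pmat_pow_nonneg M σ F n v' v) hbound
    (summable_pow_div hc0 hc1 hNpos)

end Mat2

section LP
variable [DecidableEq V]

/-- The expected total visits to a state `u ∉ F`. -/
noncomputable def zfun (M : MDP V A) (σ : M.Strategy) (F : Finset V) (α : V → ℝ)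
    (u : {w : V // w ∉ F}) : ℝ :=
  ∑ v' : {w : V // w ∉ F}, α v'.1 * ∑' n : ℕ, (M.Pmat σ F ^ n) v' u

lemma yvisit_eq (M : MDP V A) (σ : M.Strategy) (F : Finset V) (α : V → ℝ)
    {v : V} (hv : v ∉ F) (a : A) :
    M.yvisit σ F α v a = zfun M σ F α ⟨v, hv⟩ * σ.act [] v a := by
  rw [MDP.yvisit, dif_neg hv, zfun, Finset.sum_mul]
  apply Finset.sum_congr rfl
  intro v' _
  rw [tsum_mul_right]
  ring

lemma yvisit_nonneg (M : MDP V A) (σ : M.Strategy) (F : Finset V) (α : V → ℝ)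
    (hα : ∀ v, 0 ≤ α v) (v : V) (a : A) : 0 ≤ M.yvisit σ F α v a := by
  rw [MDP.yvisit]
  split
  · exact le_refl 0
  · apply Finset.sum_nonneg
    intro v' _
    apply mul_nonneg (hα _)
    apply tsum_nonneg
    intro n
    exact mul_nonneg (Pmat_pow_nonneg M σ F n _ _) (σ.act_nonneg _ _ _)

lemma zfun_eq (M : MDP V A) (σ : M.Strategy) (F : Finset V) (α : V → ℝ)
    (hsum : ∀ v' v : {w : V // w ∉ F}, Summable fun n : ℕ => (M.Pmat σ F ^ n) v' v)
    (u₀ : {w : V // w ∉ F}) :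
    zfun M σ F α u₀ = α u₀.1 + ∑ u : {w : V // w ∉ F},
      zfun M σ F α u * M.Pmat σ F u u₀ := by
  have hS : ∀ v' : {w : V // w ∉ F}, (∑' n : ℕ, (M.Pmat σ F ^ n) v' u₀)
      = (if v' = u₀ then (1:ℝ) else 0) +
        ∑ x : {w : V // w ∉ F}, (∑' n : ℕ, (M.Pmat σ F ^ n) v' x) * M.Pmat σ F x u₀ := by
    intro v'
    rw [Summable.tsum_eq_zero_add (hsum v' u₀)]
    have hrw : ∀ n : ℕ, (M.Pmat σ F ^ (n+1)) v' u₀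
        = ∑ x : {w : V // w ∉ F}, (M.Pmat σ F ^ n) v' x * M.Pmat σ F x u₀ := fun n => by
      rw [pow_succ, Matrix.mul_apply]
    congr 1
    · rw [tsum_congr hrw, Summable.tsum_finsetSum fun x _ => (hsum v' x).mul_right _]
      apply Finset.sum_congr rfl
      intro x _
      rw [tsum_mul_right]
  calc zfun M σ F α u₀
      = ∑ v' : {w : V // w ∉ F}, (α v'.1 * (if v' = u₀ then (1:ℝ) else 0)
          + α v'.1 * ∑ x : {w : V // w ∉ F},
            (∑' n : ℕ, (M.Pmat σ F ^ n) v' x) * M.Pmat σ F x u₀) := by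
        rw [zfun]
        apply Finset.sum_congr rfl
        intro v' _
        rw [hS v', mul_add]
    _ = (∑ v' : {w : V // w ∉ F}, α v'.1 * (if v' = u₀ then (1:ℝ) else 0))
          + ∑ v' : {w : V // w ∉ F}, α v'.1 * ∑ x : {w : V // w ∉ F},
            (∑' n : ℕ, (M.Pmat σ F ^ n) v' x) * M.Pmat σ F x u₀ :=
        Finset.sum_add_distrib
    _ = α u₀.1 + ∑ u : {w : V // w ∉ F}, zfun M σ F α u * M.Pmat σ F u u₀ := by
        congr 1
        · simp [mul_ite]
        · have hsplit : ∀ v' : {w : V // w ∉ F}, α v'.1 * ∑ x : {w : V // w ∉ F},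
              (∑' n : ℕ, (M.Pmat σ F ^ n) v' x) * M.Pmat σ F x u₀
              = ∑ x : {w : V // w ∉ F},
                (α v'.1 * ∑' n : ℕ, (M.Pmat σ F ^ n) v' x) * M.Pmat σ F x u₀ := fun v' => by
            rw [Finset.mul_sum]; exact Finset.sum_congr rfl fun x _ => by ring
          rw [Finset.sum_congr rfl (fun v' _ => hsplit v'), Finset.sum_comm]
          apply Finset.sum_congr rfl
          intro x _
          rw [zfun, Finset.sum_mul]

lemma lp_feasible (M : MDP V A) (σ : M.Strategy) (F : Finset V) (α : V → ℝ)
    (hα0 : ∀ v, 0 ≤ α v)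
    (hsum : ∀ v' v : {w : V // w ∉ F}, Summable fun n : ℕ => (M.Pmat σ F ^ n) v' v) :
    M.LPFeasible α F (M.yvisit σ F α) (M.yvisitF σ F α) := by
  refine ⟨?_, ?_, ?_, ?_⟩
  · intro v hv
    have h1 : ∑ a ∈ M.enabled v, M.yvisit σ F α v a = zfun M σ F α ⟨v, hv⟩ := by
      rw [Finset.sum_congr rfl (fun a _ => yvisit_eq M σ F α hv a), ← Finset.mul_sum,
        act_sum_enabled M σ v, mul_one]
    have hT : (∑ v' ∈ Fᶜ, ∑ a' ∈ M.enabled v', M.p v' a' v * M.yvisit σ F α v' a')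
        = ∑ u : {w : V // w ∉ F}, zfun M σ F α u * M.Pmat σ F u ⟨v, hv⟩ := by
      rw [sum_compl_sub F]
      apply Finset.sum_congr rfl
      intro u _
      have hterm : ∀ a' ∈ M.enabled u.1, M.p u.1 a' v * M.yvisit σ F α u.1 a'
          = zfun M σ F α u * (σ.act [] u.1 a' * M.p u.1 a' v) := by
        intro a' _
        rw [yvisit_eq M σ F α u.2 a']
        simp only [Subtype.coe_eta]
        ring
      rw [Finset.sum_congr rfl hterm, ← Finset.mul_sum]
      congr 1
    have hz := zfun_eq M σ F α hsum ⟨v, hv⟩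
    rw [h1, hT]
    simp only at hz
    linarith
  · intro v _
    rw [MDP.yvisitF]
    exact sub_self _
  · intro v _
    rw [MDP.yvisitF]
    apply Finset.sum_nonneg
    intro v' hv'
    apply Finset.sum_nonneg
    intro a' _
    exact mul_nonneg (M.p_nonneg _ _ _) (yvisit_nonneg M σ F α hα0 _ _)
  · intro v _ a _
    exact yvisit_nonneg M σ F α hα0 v a

end LP

end Aux

open MDP in
/-- For an MDP with absorbing targets, initial distribution `α` on `V ∖ F`, and a
memoryless strategy `σ` reaching `F` with positive probability from every state, the
expected-visits vector `y'` is well defined (all the series are convergent, hence all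
entries finite) and is a feasible solution of the multi-objective LP. -/
theorem expected_visits_wellDefined_and_lp_feasible
    {V A : Type} [Fintype V] [Fintype A] [Nonempty V] [Nonempty A] [DecidableEq V]
    (M : MDP V A) {k : ℕ} (Fi : Fin k → Finset V) (F : Finset V)
    (hF : F = Finset.univ.biUnion Fi)
    (habs : ∀ v ∈ F, M.Absorbing v)
    (α : V → ℝ) (hα : IsDist α) (hsupp : ∀ v ∈ F, α v = 0)
    (σ : M.Strategy) (hσ : σ.Memoryless)
    (hpos : ∀ v : V, 0 < M.PrReach σ (diracD v) (↑F : Set V)) :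
    (∀ v' v : {w : V // w ∉ F}, Summable fun n : ℕ => (M.Pmat σ F ^ n) v' v) ∧
    M.LPFeasible α F (M.yvisit σ F α) (M.yvisitF σ F α) := by
  have hreach : ∀ v : V, ∃ w ∈ F, Relation.ReflTransGen (Aux.StepS M σ) v w :=
    fun v => Aux.reach_of_pos M σ hσ F v (hpos v)
  have hsum : ∀ v' v : {w : V // w ∉ F}, Summable fun n : ℕ => (M.Pmat σ F ^ n) v' v :=
    Aux.summable_entry M σ F hreach
  exact ⟨hsum, Aux.lp_feasible M σ F α hα.1 hsum⟩
end

section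
/- There exists a finite labeled MDP M' with an initial state u and two propositional labels P_1, P_2 such that: (a) there exists a (randomized, history-dependent) strategy σ with Pr^σ_u(□◇P_1) > 0 and Pr^σ_u(□◇P_2) > 0 (indeed both probabilities equal to 1/2); (b) no memoryless strategy σ satisfies Pr^σ_u(□◇P_1) > 0 and Pr^σ_u(□◇P_2) > 0; and (c) no pure (deterministic) strategy σ satisfies Pr^σ_u(□◇P_1) > 0 and Pr^σ_u(□◇P_2) > 0. -/
open scoped BigOperators
open MeasureTheory

/-- The Büchi event `□◇P`: the set of state trajectories visiting `P` infinitely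
often. -/
def InfOften {V : Type} (P : Set V) : Set (ℕ → V) :=
  {w | ∀ N : ℕ, ∃ m : ℕ, N ≤ m ∧ w m ∈ P}


section Aux
open MDP

lemma count_testBit (M : ℕ) (β : ℕ → Bool) :
    ∀ G : Finset ℕ, G ⊆ Finset.range M →
    2 ^ G.card * ((Finset.range (2^M)).filter (fun k => ∀ j ∈ G, Nat.testBit k j = β j)).card
      = 2 ^ M := by
  intro G
  induction G using Finset.induction_on with
  | empty =>
      intro _
      simp
  | @insert a G ha ih =>
      intro hsub
      have haM : a < M := Finset.mem_range.mp (hsub (Finset.mem_insert_self a G))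
      have hGsub : G ⊆ Finset.range M := fun x hx => hsub (Finset.mem_insert_of_mem hx)
      have key : ((Finset.range (2^M)).filter (fun k => ∀ j ∈ G, Nat.testBit k j = β j)).card
          = 2 * ((Finset.range (2^M)).filter
              (fun k => ∀ j ∈ insert a G, Nat.testBit k j = β j)).card := by
        -- split on bit a
        have hsplit :
            ((Finset.range (2^M)).filter (fun k => ∀ j ∈ G, Nat.testBit k j = β j)).card
            = (((Finset.range (2^M)).filter (fun k => ∀ j ∈ G, Nat.testBit k j = β j)).filter
                (fun k => Nat.testBit k a = β a)).card
            + (((Finset.range (2^M)).filter (fun k => ∀ j ∈ G, Nat.testBit k j = β j)).filter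
                (fun k => ¬ (Nat.testBit k a = β a))).card := by
          exact (Finset.card_filter_add_card_filter_not _).symm
        have h1 : (((Finset.range (2^M)).filter (fun k => ∀ j ∈ G, Nat.testBit k j = β j)).filter
                (fun k => Nat.testBit k a = β a))
            = ((Finset.range (2^M)).filter (fun k => ∀ j ∈ insert a G, Nat.testBit k j = β j)) := by
          rw [Finset.filter_filter]
          apply Finset.filter_congr
          intro k _
          simp only [Finset.mem_insert, forall_eq_or_imp]
          tauto
        have h2 : (((Finset.range (2^M)).filter (fun k => ∀ j ∈ G, Nat.testBit k j = β j)).filter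
                (fun k => ¬ (Nat.testBit k a = β a))).card
            = ((Finset.range (2^M)).filter
                (fun k => ∀ j ∈ insert a G, Nat.testBit k j = β j)).card := by
          refine Finset.card_bij' (fun k _ => k ^^^ 2^a) (fun k _ => k ^^^ 2^a)
            ?hi ?hj ?left ?right
          case left => intro k _; simp [xor_cancel_right]
          case right => intro k _; simp [xor_cancel_right]
          case hi =>
            intro k hk
            simp only [Finset.mem_filter, Finset.mem_range] at hk ⊢
            obtain ⟨⟨hklt, hkG⟩, hka⟩ := hk
            have hxlt : k ^^^ 2^a < 2^M :=
              Nat.xor_lt_two_pow hklt (Nat.pow_lt_pow_right (by norm_num) haM)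
            refine ⟨hxlt, ?_⟩
            intro j hj
            rcases Finset.mem_insert.mp hj with rfl | hjG
            · rw [Nat.testBit_xor, Nat.testBit_two_pow]
              revert hka
              cases hb : Nat.testBit k j <;> cases hb' : β j <;> simp
            · have hja : j ≠ a := fun h => ha (h ▸ hjG)
              rw [Nat.testBit_xor, Nat.testBit_two_pow]
              simp [hja.symm, hkG j hjG]
          case hj =>
            intro k hk
            simp only [Finset.mem_filter, Finset.mem_range] at hk ⊢
            obtain ⟨hklt, hkins⟩ := hk
            have hxlt : k ^^^ 2^a < 2^M :=
              Nat.xor_lt_two_pow hklt (Nat.pow_lt_pow_right (by norm_num) haM)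
            have hka := hkins a (Finset.mem_insert_self a G)
            refine ⟨⟨hxlt, ?_⟩, ?_⟩
            · intro j hjG
              have hja : j ≠ a := fun h => ha (h ▸ hjG)
              rw [Nat.testBit_xor, Nat.testBit_two_pow]
              simp [hja.symm, hkins j (Finset.mem_insert_of_mem hjG)]
            · rw [Nat.testBit_xor, Nat.testBit_two_pow]
              simp [hka]
        rw [hsplit, h1, h2]; ring
      calc 2 ^ (insert a G).card * ((Finset.range (2^M)).filter
              (fun k => ∀ j ∈ insert a G, Nat.testBit k j = β j)).card
          = 2 ^ G.card * (2 * ((Finset.range (2^M)).filter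
              (fun k => ∀ j ∈ insert a G, Nat.testBit k j = β j)).card) := by
            rw [Finset.card_insert_of_notMem ha]; ring
        _ = 2 ^ G.card * ((Finset.range (2^M)).filter
              (fun k => ∀ j ∈ G, Nat.testBit k j = β j)).card := by rw [← key]
        _ = 2 ^ M := ih hGsub

open MeasureTheory

noncomputable def Db (m : ℕ) (x : ℝ) : Bool := decide (⌊x * 2 ^ (m + 1)⌋ % 2 = 1)

lemma floor_digit {x : ℝ} (hx : x ∈ Set.Ico (0:ℝ) 1) {i M : ℕ} (hi : i < M) :
    Db i x = Nat.testBit (⌊x * 2 ^ M⌋).toNat (M - 1 - i) := by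
  obtain ⟨hx0, hx1⟩ := hx
  set k : ℕ := (⌊x * 2 ^ M⌋).toNat with hk
  have hfl0 : (0:ℤ) ≤ ⌊x * 2 ^ M⌋ := Int.floor_nonneg.mpr (by positivity)
  have hkz : (k : ℤ) = ⌊x * 2 ^ M⌋ := Int.toNat_of_nonneg hfl0
  have hkle : (k : ℝ) ≤ x * 2 ^ M := by
    have := Int.floor_le (x * 2 ^ M)
    rw [← hkz] at this; exact_mod_cast this
  have hklt : x * 2 ^ M < (k : ℝ) + 1 := by
    have := Int.lt_floor_add_one (x * 2 ^ M)
    rw [← hkz] at this; exact_mod_cast this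
  set j : ℕ := M - 1 - i with hj
  have hM : M = i + 1 + j := by omega
  set q : ℕ := k / 2 ^ j with hq
  have hfloor : ⌊x * 2 ^ (i+1)⌋ = (q : ℤ) := by
    have h2j : (0:ℝ) < 2 ^ j := by positivity
    have hdiv : x * 2 ^ (i+1) = x * 2 ^ M / 2 ^ j := by
      rw [hM]; field_simp; ring
    have hql : (q:ℝ) * 2 ^ j ≤ (k:ℝ) := by
      exact_mod_cast Nat.cast_le.mpr (Nat.div_mul_le_self k (2^j))
    have hqu : (k:ℝ) + 1 ≤ ((q:ℝ) + 1) * 2 ^ j := by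
      have : k + 1 ≤ (q + 1) * 2 ^ j := by
        have h1 : k % 2^j < 2^j := Nat.mod_lt _ (by positivity)
        have h2 : 2^j * q + k % 2^j = k := Nat.div_add_mod k (2^j)
        have h3 : (q+1) * 2^j = 2^j * q + 2^j := by ring
        omega
      exact_mod_cast this
    rw [hdiv]
    rw [Int.floor_eq_iff]
    constructor
    · push_cast
      rw [le_div_iff₀ h2j]
      exact le_trans hql hkle
    · push_cast
      rw [div_lt_iff₀ h2j]
      calc x * 2 ^ M < (k:ℝ) + 1 := hklt
        _ ≤ ((q:ℝ) + 1) * 2 ^ j := hqu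
  rw [Nat.testBit_eq_decide_div_mod_eq]
  rw [Db, hfloor]
  have : ((q:ℤ)) % 2 = 1 ↔ q % 2 = 1 := by omega
  simp [this, ← hq]

lemma setE_eq (F : Finset ℕ) (b : ℕ → Bool) {M : ℕ} (hFM : ∀ i ∈ F, i < M)
    (S : Finset ℕ)
    (hS : ∀ k, k ∈ S ↔ (k < 2^M ∧ ∀ i ∈ F, Nat.testBit k (M-1-i) = b i)) :
    {x : ℝ | x ∈ Set.Ico (0:ℝ) 1 ∧ ∀ i ∈ F, Db i x = b i}
    = ⋃ k ∈ S, Set.Ico ((k:ℝ)/2^M) (((k:ℝ)+1)/2^M) := by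
  ext x
  simp only [Set.mem_iUnion, Set.mem_setOf_eq, exists_prop, Set.mem_Ico]
  constructor
  · rintro ⟨⟨hx0, hx1⟩, hdig⟩
    set k : ℕ := (⌊x * 2 ^ M⌋).toNat with hk
    have hfl0 : (0:ℤ) ≤ ⌊x * 2 ^ M⌋ := Int.floor_nonneg.mpr (by positivity)
    have hkz : (k : ℤ) = ⌊x * 2 ^ M⌋ := Int.toNat_of_nonneg hfl0
    have hkle : (k : ℝ) ≤ x * 2 ^ M := by
      have := Int.floor_le (x * 2 ^ M); rw [← hkz] at this; exact_mod_cast this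
    have hklt : x * 2 ^ M < (k : ℝ) + 1 := by
      have := Int.lt_floor_add_one (x * 2 ^ M); rw [← hkz] at this; exact_mod_cast this
    have h2M : (0:ℝ) < 2^M := by positivity
    refine ⟨k, (hS k).mpr ⟨?_, ?_⟩, ?_, ?_⟩
    · have h1 : x * 2^M < 2^M := by nlinarith
      have : (k:ℝ) < 2^M := lt_of_le_of_lt hkle h1
      exact_mod_cast this
    · intro i hiF
      rw [← floor_digit ⟨hx0, hx1⟩ (hFM i hiF)]
      exact hdig i hiF
    · rw [div_le_iff₀ h2M]; linarith
    · rw [lt_div_iff₀ h2M]; linarith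
  · rintro ⟨k, hkS, hxl, hxu⟩
    obtain ⟨hklt2, hbits⟩ := (hS k).mp hkS
    have h2M : (0:ℝ) < 2^M := by positivity
    have hkR : (k:ℝ) < 2^M := by exact_mod_cast hklt2
    have hx0 : (0:ℝ) ≤ x := le_trans (by positivity) hxl
    have hk1 : ((k:ℝ)+1) ≤ 2^M := by
      have : (k+1 : ℕ) ≤ 2^M := hklt2
      exact_mod_cast this
    have hx1 : x < 1 := by
      have h1 : ((k:ℝ)+1)/2^M ≤ 1 := by rw [div_le_one h2M]; exact hk1
      linarith
    have hfloor : (⌊x * 2 ^ M⌋).toNat = k := by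
      have : ⌊x * 2^M⌋ = (k:ℤ) := by
        rw [Int.floor_eq_iff]
        constructor
        · push_cast; rw [div_le_iff₀ h2M] at hxl; linarith
        · push_cast; rw [lt_div_iff₀ h2M] at hxu; linarith
      rw [this]; exact Int.toNat_natCast k
    refine ⟨⟨hx0, hx1⟩, ?_⟩
    intro i hiF
    rw [floor_digit ⟨hx0, hx1⟩ (hFM i hiF), hfloor]
    exact hbits i hiF

lemma vol_E (F : Finset ℕ) (b : ℕ → Bool) :
    volume {x : ℝ | x ∈ Set.Ico (0:ℝ) 1 ∧ ∀ i ∈ F, Db i x = b i}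
      = (2:ENNReal)⁻¹ ^ F.card := by
  set M : ℕ := F.sup id + 1 with hM
  have hFM : ∀ i ∈ F, i < M := by
    intro i hi
    have : i ≤ F.sup id := Finset.le_sup (f := id) hi
    omega
  set G : Finset ℕ := F.image (fun i => M - 1 - i) with hG
  have hinj : Set.InjOn (fun i => M - 1 - i) F := by
    intro i hi i' hi' h
    have h1 := hFM i hi; have h2 := hFM i' hi'
    simp only at h
    omega
  have hGcard : G.card = F.card := Finset.card_image_of_injOn hinj
  have hGsub : G ⊆ Finset.range M := by
    intro j hj
    simp only [hG, Finset.mem_image] at hj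
    obtain ⟨i, _, rfl⟩ := hj
    simp only [Finset.mem_range]
    omega
  set S : Finset ℕ := (Finset.range (2^M)).filter
      (fun k => ∀ j ∈ G, Nat.testBit k j = b (M - 1 - j)) with hSdef
  have hS : ∀ k, k ∈ S ↔ (k < 2^M ∧ ∀ i ∈ F, Nat.testBit k (M-1-i) = b i) := by
    intro k
    rw [hSdef, Finset.mem_filter, Finset.mem_range]
    apply and_congr Iff.rfl
    constructor
    · intro h i hiF
      have hmem : M - 1 - i ∈ G := by
        rw [hG]; exact Finset.mem_image_of_mem _ hiF
      have := h _ hmem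
      rw [this]
      congr 1
      have := hFM i hiF
      omega
    · intro h j hjG
      rw [hG, Finset.mem_image] at hjG
      obtain ⟨i, hiF, rfl⟩ := hjG
      rw [h i hiF]
      congr 1
      have := hFM i hiF
      omega
  rw [setE_eq F b hFM S hS]
  have hdisj : Set.PairwiseDisjoint (↑S)
      (fun k : ℕ => Set.Ico ((k:ℝ)/2^M) (((k:ℝ)+1)/2^M)) := by
    intro k _ k' _ hkk'
    apply Set.disjoint_left.mpr
    rintro x ⟨h1, h2⟩ ⟨h3, h4⟩
    have h2M : (0:ℝ) < 2^M := by positivity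
    rcases Nat.lt_or_ge k k' with h | h
    · have : (k:ℝ) + 1 ≤ (k':ℝ) := by exact_mod_cast h
      rw [div_le_iff₀ h2M] at h3
      rw [lt_div_iff₀ h2M] at h2
      nlinarith
    · have : k' < k := lt_of_le_of_ne h (fun h => hkk' (h ▸ rfl))
      have : (k':ℝ) + 1 ≤ (k:ℝ) := by exact_mod_cast this
      rw [div_le_iff₀ h2M] at h1
      rw [lt_div_iff₀ h2M] at h4
      nlinarith
  rw [measure_biUnion_finset hdisj (fun k _ => measurableSet_Ico)]
  have hvol : ∀ k : ℕ, volume (Set.Ico ((k:ℝ)/2^M) (((k:ℝ)+1)/2^M))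
      = ENNReal.ofReal ((1:ℝ)/2^M) := by
    intro k
    rw [Real.volume_Ico]
    congr 1
    field_simp
    ring
  simp only [hvol]
  rw [Finset.sum_const, nsmul_eq_mul]
  have hcount := count_testBit M (fun j => b (M - 1 - j)) G hGsub
  have hcle : G.card ≤ M := by
    calc G.card ≤ (Finset.range M).card := Finset.card_le_card hGsub
      _ = M := Finset.card_range M
  have hfe : S.card = 2 ^ (M - G.card) := by
    have h2 : (2:ℕ)^(G.card) * S.card = 2 ^ M := hcount
    have h3 : (2:ℕ)^M = 2^(G.card) * 2^(M - G.card) := by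
      rw [← pow_add]; congr 1; omega
    rw [h3] at h2
    exact Nat.eq_of_mul_eq_mul_left (by positivity) h2
  have hofr : ENNReal.ofReal ((1:ℝ)/2^M) = (2:ENNReal)⁻¹ ^ M := by
    rw [one_div, ENNReal.ofReal_inv_of_pos (by positivity), ENNReal.ofReal_pow (by norm_num),
      ENNReal.inv_pow]
    congr 1
    norm_num
  rw [hfe, hofr, hGcard]
  push_cast
  rw [← ENNReal.inv_pow, ← ENNReal.inv_pow]
  have hsplit : (2:ENNReal)^M = 2^(M-F.card) * 2^(F.card) := by
    rw [← pow_add]; congr 1; omega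
  rw [hsplit, ENNReal.mul_inv (by simp) (by simp), ← mul_assoc,
    ENNReal.mul_inv_cancel (by simp) (by simp), one_mul]

lemma bit_eq (m : ℕ) (x : ℝ) : MDP.bit m x = if Db m x then 1 else 0 := by
  simp [MDP.bit, Db]

lemma bit_nonneg (m : ℕ) (x : ℝ) : 0 ≤ MDP.bit m x := by
  rw [bit_eq]; split <;> norm_num

lemma bit_le_one (m : ℕ) (x : ℝ) : MDP.bit m x ≤ 1 := by
  rw [bit_eq]; split <;> norm_num

lemma summable_halfpow : Summable (fun n : ℕ => ((1:ℝ)/2)^(n+1)) := by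
  simpa [pow_succ] using summable_geometric_two.mul_right ((1:ℝ)/2)

lemma term_le (k : ℕ) (x : ℝ) (n : ℕ) :
    MDP.bit (Nat.pair k n) x / 2^(n+1) ≤ ((1:ℝ)/2)^(n+1) := by
  rw [div_pow, one_pow]
  rw [div_le_div_iff₀ (by positivity) (by positivity)]
  have := bit_le_one (Nat.pair k n) x
  nlinarith [pow_pos (by norm_num : (0:ℝ) < 2) (n+1)]

lemma term_nonneg (k : ℕ) (x : ℝ) (n : ℕ) :
    0 ≤ MDP.bit (Nat.pair k n) x / 2^(n+1) := by
  have := bit_nonneg (Nat.pair k n) x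
  positivity

lemma summable_unif (k : ℕ) (x : ℝ) :
    Summable (fun n : ℕ => MDP.bit (Nat.pair k n) x / 2^(n+1)) :=
  Summable.of_nonneg_of_le (term_nonneg k x) (term_le k x) summable_halfpow

lemma unif_nonneg (k : ℕ) (x : ℝ) : 0 ≤ MDP.unif k x :=
  tsum_nonneg (term_nonneg k x)

lemma tsum_halfpow : ∑' n : ℕ, ((1:ℝ)/2)^(n+1) = 1 := by
  have h := tsum_geometric_two' 1
  calc ∑' n : ℕ, ((1:ℝ)/2)^(n+1) = ∑' n : ℕ, (1:ℝ)/2/2^n := by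
        apply tsum_congr
        intro n
        rw [div_pow, one_pow, pow_succ, div_div, mul_comm]
    _ = 1 := h

lemma unif_le_one (k : ℕ) (x : ℝ) : MDP.unif k x ≤ 1 := by
  rw [MDP.unif, ← tsum_halfpow]
  exact Summable.tsum_le_tsum (term_le k x) (summable_unif k x) summable_halfpow

-- tail-bound function and its tsum
lemma tsum_tail (m : ℕ) :
    ∑' n : ℕ, (if n < m then 0 else ((1:ℝ)/2)^(n+1)) = ((1:ℝ)/2)^m := by
  induction m with
  | zero => simpa using tsum_halfpow
  | succ m ih =>
      have hsum : Summable (fun n : ℕ => (if n < m then 0 else ((1:ℝ)/2)^(n+1))) := by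
        apply Summable.of_nonneg_of_le _ _ summable_halfpow
        · intro n; split <;> positivity
        · intro n; split <;> first | positivity | exact le_rfl
      have step := Summable.tsum_eq_add_tsum_ite hsum m
      have hfe : (fun n : ℕ => if n = m then 0 else (if n < m then 0 else ((1:ℝ)/2)^(n+1)))
          = (fun n : ℕ => (if n < m + 1 then 0 else ((1:ℝ)/2)^(n+1))) := by
        funext n
        by_cases h1 : n = m
        · simp [h1]
        · by_cases h2 : n < m
          · have h3 : n < m + 1 := by omega
            simp [h1, h2, h3]
          · have h3 : ¬ n < m + 1 := by omega
            simp [h1, h2, h3]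
      rw [ih] at step
      rw [hfe] at step
      have hm : (if m < m then (0:ℝ) else ((1:ℝ)/2)^(m+1)) = ((1:ℝ)/2)^(m+1) := by simp
      rw [hm] at step
      have hp : ((1:ℝ)/2)^m = 2 * ((1:ℝ)/2)^(m+1) := by rw [pow_succ]; ring
      linarith [step, hp]

lemma unif_le_of_false {k m : ℕ} {x : ℝ}
    (h : ∀ j < m, Db (Nat.pair k j) x = false) : MDP.unif k x ≤ ((1:ℝ)/2)^m := by
  rw [MDP.unif, ← tsum_tail m]
  apply Summable.tsum_le_tsum _ (summable_unif k x)
  · apply Summable.of_nonneg_of_le _ _ summable_halfpow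
    · intro n; split <;> positivity
    · intro n; split <;> first | positivity | exact le_rfl
  · intro n
    by_cases hn : n < m
    · simp only [hn, if_pos]
      rw [bit_eq, h n hn]
      simp
    · simp only [hn, if_neg, if_false]
      exact term_le k x n

lemma geom_partial (m : ℕ) : ∑ j ∈ Finset.range m, ((1:ℝ)/2)^(j+1) = 1 - ((1:ℝ)/2)^m := by
  induction m with
  | zero => simp
  | succ m ih =>
      rw [Finset.sum_range_succ, ih, pow_succ]
      ring

lemma unif_ge_of_true {k m : ℕ} {x : ℝ}
    (h : ∀ j < m, Db (Nat.pair k j) x = true) : 1 - ((1:ℝ)/2)^m ≤ MDP.unif k x := by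
  have hps : ∑ j ∈ Finset.range m, MDP.bit (Nat.pair k j) x / 2^(j+1)
      = ∑ j ∈ Finset.range m, ((1:ℝ)/2)^(j+1) := by
    apply Finset.sum_congr rfl
    intro j hj
    rw [bit_eq, h j (Finset.mem_range.mp hj)]
    rw [if_pos rfl, div_pow, one_pow]
  have hgeo := geom_partial m
  calc 1 - ((1:ℝ)/2)^m = ∑ j ∈ Finset.range m, MDP.bit (Nat.pair k j) x / 2^(j+1) := by
        rw [hps, hgeo]
    _ ≤ MDP.unif k x := Summable.sum_le_tsum _ (fun n _ => term_nonneg k x n) (summable_unif k x)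

lemma unif_lt {k m n0 : ℕ} {x : ℝ}
    (h : ∀ j < m, Db (Nat.pair k j) x = false) (hn0 : m ≤ n0)
    (h0 : Db (Nat.pair k n0) x = false) : MDP.unif k x < ((1:ℝ)/2)^m := by
  rw [MDP.unif, ← tsum_tail m]
  have hsumg : Summable (fun n : ℕ => (if n < m then 0 else ((1:ℝ)/2)^(n+1))) := by
    apply Summable.of_nonneg_of_le _ _ summable_halfpow
    · intro n; split <;> positivity
    · intro n; split <;> first | positivity | exact le_rfl
  apply Summable.tsum_lt_tsum (i := n0) _ _ (summable_unif k x) hsumg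
  · intro n
    by_cases hn : n < m
    · simp only [hn, if_pos]
      rw [bit_eq, h n hn]; simp
    · simp only [hn, if_neg, if_false]
      exact term_le k x n
  · have hlt : ¬ (n0 < m) := by omega
    rw [if_neg hlt, bit_eq, h0]
    simp only [Bool.false_eq_true, if_false, zero_div]
    positivity

lemma unif_lt_one_of_false {k n0 : ℕ} {x : ℝ}
    (h0 : Db (Nat.pair k n0) x = false) : MDP.unif k x < 1 := by
  have := unif_lt (k := k) (m := 0) (n0 := n0) (x := x) (by omega) (by omega) h0
  simpa using this

lemma all_true_of_not_lt_one {k : ℕ} {x : ℝ}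
    (h : ¬ MDP.unif k x < 1) : ∀ n, Db (Nat.pair k n) x = true := by
  intro n
  cases hDb : Db (Nat.pair k n) x
  · exact absurd (unif_lt_one_of_false hDb) h
  · rfl

lemma vol_tail_null (g : ℕ → ℕ) (hg : Function.Injective g) :
    volume {x : ℝ | x ∈ Set.Ico (0:ℝ) 1 ∧ ∀ n, Db (g n) x = true} = 0 := by
  have hub : ∀ T : ℕ, volume {x : ℝ | x ∈ Set.Ico (0:ℝ) 1 ∧ ∀ n, Db (g n) x = true}
      ≤ (2:ENNReal)⁻¹ ^ T := by
    intro T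
    have hsub : {x : ℝ | x ∈ Set.Ico (0:ℝ) 1 ∧ ∀ n, Db (g n) x = true}
        ⊆ {x : ℝ | x ∈ Set.Ico (0:ℝ) 1 ∧ ∀ i ∈ (Finset.range T).image g, Db i x = true} := by
      rintro x ⟨hx, hall⟩
      refine ⟨hx, ?_⟩
      intro i hi
      rw [Finset.mem_image] at hi
      obtain ⟨n, _, rfl⟩ := hi
      exact hall n
    have hcard : ((Finset.range T).image g).card = T := by
      rw [Finset.card_image_of_injective _ hg, Finset.card_range]
    calc volume {x : ℝ | x ∈ Set.Ico (0:ℝ) 1 ∧ ∀ n, Db (g n) x = true}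
        ≤ volume {x : ℝ | x ∈ Set.Ico (0:ℝ) 1 ∧ ∀ i ∈ (Finset.range T).image g, Db i x = true} :=
          measure_mono hsub
      _ = (2:ENNReal)⁻¹ ^ T := by rw [vol_E _ (fun _ => true), hcard]
  have htend : Filter.Tendsto (fun T : ℕ => (2:ENNReal)⁻¹ ^ T) Filter.atTop (nhds 0) :=
    ENNReal.tendsto_pow_atTop_nhds_zero_of_lt_one (by
      rw [ENNReal.inv_lt_one]
      exact ENNReal.one_lt_two)
  have := ge_of_tendsto htend (Filter.Eventually.of_forall hub)
  exact le_antisymm this zero_le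

/-- The set of "bad" seeds in [0,1]. -/
def badN : Set ℝ := {x : ℝ | x ∈ Set.Icc (0:ℝ) 1 ∧ ¬ ∀ k, MDP.unif k x < 1}

lemma vol_badN : volume badN = 0 := by
  have hsub : badN ⊆ ⋃ k : ℕ, {x : ℝ | x ∈ Set.Ico (0:ℝ) 1 ∧ ∀ n, Db (Nat.pair k n) x = true} := by
    rintro x ⟨hx, hbad⟩
    push_neg at hbad
    obtain ⟨k, hk⟩ := hbad
    have hall := all_true_of_not_lt_one (k := k) (x := x) (by exact not_lt.mpr hk)
    refine Set.mem_iUnion.mpr ⟨k, ⟨?_, hall⟩⟩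
    constructor
    · exact hx.1
    · rcases lt_or_eq_of_le hx.2 with h | h
      · exact h
      · exfalso
        have : MDP.unif k x < 1 := by
          apply unif_lt_one_of_false (n0 := 0)
          subst h
          have hfl : ⌊(1:ℝ) * 2 ^ (Nat.pair k 0 + 1)⌋ = 2^(Nat.pair k 0 + 1) := by
            rw [one_mul]
            rw [show ((2:ℝ)^(Nat.pair k 0 + 1)) = ((2^(Nat.pair k 0 + 1) : ℤ) : ℝ) by push_cast; ring]
            exact Int.floor_intCast _
          rw [Db, hfl]
          simp only [decide_eq_false_iff_not, pow_succ]
          omega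
        exact absurd this (not_lt.mpr hk)
  refine measure_mono_null hsub ?_
  apply measure_iUnion_null
  intro k
  exact vol_tail_null (fun n => Nat.pair k n) (fun a b h => (Nat.pair_eq_pair.mp h).2)

lemma vol_sandwich {A E Z : Set ℝ} (h1 : E \ Z ⊆ A) (h2 : A ⊆ E ∪ Z) (hZ : volume Z = 0) :
    volume A = volume E := by
  apply le_antisymm
  · calc volume A ≤ volume (E ∪ Z) := measure_mono h2
      _ ≤ volume E + volume Z := measure_union_le _ _
      _ = volume E := by rw [hZ, add_zero]
  · calc volume E ≤ volume ((E \ Z) ∪ Z) := measure_mono (by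
        intro x hx
        by_cases h : x ∈ Z
        · exact Or.inr h
        · exact Or.inl ⟨hx, h⟩)
      _ ≤ volume (E \ Z) + volume Z := measure_union_le _ _
      _ = volume (E \ Z) := by rw [hZ, add_zero]
      _ ≤ volume A := measure_mono h1

/-- decoding function for block patterns -/
def bfun (T m : ℕ) (γ : Fin T → Fin m → Bool) (p : ℕ) : Bool :=
  if h : ((Nat.unpair p).1 - 1)/2 < T ∧ (Nat.unpair p).2 < m then
    γ ⟨((Nat.unpair p).1 - 1)/2, h.1⟩ ⟨(Nat.unpair p).2, h.2⟩
  else true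

lemma bfun_pair {T m n j : ℕ} (hn : n < T) (hj : j < m) (γ : Fin T → Fin m → Bool) :
    bfun T m γ (Nat.pair (2*n+1) j) = γ ⟨n, hn⟩ ⟨j, hj⟩ := by
  have hd : (2*n+1-1)/2 = n := by omega
  simp only [bfun, Nat.unpair_pair, hd]
  rw [dif_pos ⟨hn, hj⟩]

lemma vol_blocks (T m : ℕ) (w : Bool) :
    volume {x : ℝ | x ∈ Set.Ico (0:ℝ) 1 ∧
        ∀ n < T, ¬ (∀ j < m, Db (Nat.pair (2*n+1) j) x = w)}
      ≤ ((((2:ℕ)^m - 1 : ℕ) : ENNReal) * (2:ENNReal)⁻¹^m)^T := by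
  classical
  set FT : Finset ℕ := ((Finset.range T) ×ˢ (Finset.range m)).image
      (fun q => Nat.pair (2*q.1+1) q.2) with hFT
  have hinj : Set.InjOn (fun q : ℕ × ℕ => Nat.pair (2*q.1+1) q.2)
      ↑((Finset.range T) ×ˢ (Finset.range m)) := by
    intro q _ q' _ h
    simp only at h
    obtain ⟨h1, h2⟩ := Nat.pair_eq_pair.mp h
    ext
    · omega
    · exact h2
  have hcard : FT.card = T * m := by
    rw [hFT, Finset.card_image_of_injOn hinj, Finset.card_product,
      Finset.card_range, Finset.card_range]
  have hsub : {x : ℝ | x ∈ Set.Ico (0:ℝ) 1 ∧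
        ∀ n < T, ¬ (∀ j < m, Db (Nat.pair (2*n+1) j) x = w)}
      ⊆ ⋃ γ : {γ : Fin T → Fin m → Bool // ∀ n, γ n ≠ (fun _ => w)},
          {x : ℝ | x ∈ Set.Ico (0:ℝ) 1 ∧ ∀ i ∈ FT, Db i x = bfun T m γ.1 i} := by
    rintro x ⟨hx, hpat⟩
    have hne : ∀ n : Fin T, (fun j : Fin m => Db (Nat.pair (2*(n:ℕ)+1) (j:ℕ)) x) ≠ (fun _ => w) := by
      intro n hc
      apply hpat n n.2
      intro j hj
      exact congrFun hc ⟨j, hj⟩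
    refine Set.mem_iUnion.mpr ⟨⟨fun n j => Db (Nat.pair (2*(n:ℕ)+1) (j:ℕ)) x, hne⟩, hx, ?_⟩
    intro i hi
    rw [hFT, Finset.mem_image] at hi
    obtain ⟨q, hq, rfl⟩ := hi
    rw [Finset.mem_product, Finset.mem_range, Finset.mem_range] at hq
    rw [bfun_pair hq.1 hq.2]
  have hΓcard : Fintype.card {γ : Fin T → Fin m → Bool // ∀ n, γ n ≠ (fun _ => w)}
      = ((2:ℕ)^m - 1)^T := by
    rw [Fintype.card_congr (Equiv.subtypePiEquivPi
      (p := fun (n : Fin T) (h : Fin m → Bool) => h ≠ (fun _ => w)))]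
    rw [Fintype.card_pi]
    have hone : ∀ n : Fin T,
        Fintype.card {h : Fin m → Bool // h ≠ (fun _ => w)} = 2^m - 1 := by
      intro n
      rw [Fintype.card_subtype_compl (p := fun h : Fin m → Bool => h = (fun _ => w))]
      rw [Fintype.card_subtype_eq]
      simp
    rw [Finset.prod_congr rfl (fun n _ => hone n)]
    rw [Finset.prod_const, Finset.card_univ, Fintype.card_fin]
  calc volume {x : ℝ | x ∈ Set.Ico (0:ℝ) 1 ∧
        ∀ n < T, ¬ (∀ j < m, Db (Nat.pair (2*n+1) j) x = w)}
      ≤ volume (⋃ γ : {γ : Fin T → Fin m → Bool // ∀ n, γ n ≠ (fun _ => w)},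
          {x : ℝ | x ∈ Set.Ico (0:ℝ) 1 ∧ ∀ i ∈ FT, Db i x = bfun T m γ.1 i}) :=
        measure_mono hsub
    _ ≤ ∑' γ : {γ : Fin T → Fin m → Bool // ∀ n, γ n ≠ (fun _ => w)},
          volume {x : ℝ | x ∈ Set.Ico (0:ℝ) 1 ∧ ∀ i ∈ FT, Db i x = bfun T m γ.1 i} :=
        measure_iUnion_le _
    _ = ∑' _γ : {γ : Fin T → Fin m → Bool // ∀ n, γ n ≠ (fun _ => w)},
          (2:ENNReal)⁻¹ ^ (T*m) := by
        apply tsum_congr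
        intro γ
        rw [vol_E FT (bfun T m γ.1), hcard]
    _ = (Fintype.card {γ : Fin T → Fin m → Bool // ∀ n, γ n ≠ (fun _ => w)} : ENNReal)
          * (2:ENNReal)⁻¹ ^ (T*m) := by
        rw [tsum_fintype, Finset.sum_const, nsmul_eq_mul, Finset.card_univ]
    _ = ((((2:ℕ)^m - 1 : ℕ) : ENNReal) * (2:ENNReal)⁻¹^m)^T := by
        rw [hΓcard, mul_pow, Nat.cast_pow, mul_comm T m, pow_mul]

lemma vol_blocks_all (m : ℕ) (w : Bool) :
    volume {x : ℝ | x ∈ Set.Ico (0:ℝ) 1 ∧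
        ∀ n : ℕ, ¬ (∀ j < m, Db (Nat.pair (2*n+1) j) x = w)} = 0 := by
  set ρ : ENNReal := (((2:ℕ)^m - 1 : ℕ) : ENNReal) * (2:ENNReal)⁻¹^m with hρ
  have hub : ∀ T : ℕ, volume {x : ℝ | x ∈ Set.Ico (0:ℝ) 1 ∧
      ∀ n : ℕ, ¬ (∀ j < m, Db (Nat.pair (2*n+1) j) x = w)} ≤ ρ^T := by
    intro T
    refine le_trans (measure_mono ?_) (vol_blocks T m w)
    rintro x ⟨hx, hall⟩
    exact ⟨hx, fun n _ => hall n⟩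
  have hρlt : ρ < 1 := by
    rw [hρ, ← ENNReal.inv_pow, ← div_eq_mul_inv]
    rw [ENNReal.div_lt_iff (Or.inl (by positivity)) (Or.inl (by simp))]
    rw [one_mul]
    have h1 : ((2:ℕ)^m - 1 : ℕ) < 2^m := by
      have : (0:ℕ) < 2^m := by positivity
      omega
    calc (((2:ℕ)^m - 1 : ℕ) : ENNReal) < (((2:ℕ)^m : ℕ) : ENNReal) := by
          exact_mod_cast h1
      _ = (2:ENNReal)^m := by push_cast; ring
  have htend : Filter.Tendsto (fun T : ℕ => ρ^T) Filter.atTop (nhds 0) :=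
    ENNReal.tendsto_pow_atTop_nhds_zero_of_lt_one hρlt
  have := ge_of_tendsto htend (Filter.Eventually.of_forall hub)
  exact le_antisymm this zero_le

/-- a probability vector on `Fin 2` which puts mass 1 on `a` is `diracD a` -/
lemma eq_diracD (q : Fin 2 → ℝ) (hsum : q 0 + q 1 = 1) (a : Fin 2) (ha : q a = 1)
    (hnn : ∀ b, 0 ≤ q b) : q = MDP.diracD a := by
  funext b
  fin_cases a <;> fin_cases b <;> simp_all [MDP.diracD] <;> linarith

/-- sampling lemma on `Fin 2` -/
lemma sample_two : ∃ c d : Fin 2, c ≠ d ∧ ∀ (q : Fin 2 → ℝ), (∀ a, 0 ≤ q a) →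
    q 0 + q 1 = 1 → ∀ u : ℝ, 0 ≤ u → u < 1 →
    MDP.sample q u = if u < q c then c else d := by
  have hcard : Fintype.card (Fin 2) = 2 := by simp
  set e := Fintype.equivFin (Fin 2) with he
  have h2 : 0 < Fintype.card (Fin 2) := by omega
  have h1lt : 1 < Fintype.card (Fin 2) := by omega
  set i0 : Fin (Fintype.card (Fin 2)) := ⟨0, h2⟩ with hi0
  set i1 : Fin (Fintype.card (Fin 2)) := ⟨1, h1lt⟩ with hi1
  refine ⟨e.symm i0, e.symm i1, fun h => absurd (e.symm.injective h) (by simp [hi0, hi1, Fin.ext_iff]), ?_⟩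
  intro q hnn hsum u hu0 hu1
  have hIic0 : Finset.Iic i0 = {i0} := by
    ext j
    simp only [Finset.mem_Iic, Finset.mem_singleton]
    constructor
    · intro hj; ext; simp [hi0] at *; omega
    · rintro rfl; exact le_refl _
  have hIic1 : Finset.Iic i1 = Finset.univ := by
    apply Finset.eq_univ_iff_forall.mpr
    intro j
    simp only [Finset.mem_Iic]
    rcases j with ⟨jv, hjv⟩
    rw [hi1]
    exact Fin.mk_le_mk.mpr (by omega)
  have hcum1 : ∑ j ∈ Finset.Iic i1, q (e.symm j) = 1 := by
    rw [hIic1]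
    rw [Equiv.sum_comp e.symm q]
    rw [Fin.sum_univ_two]
    exact hsum
  have hmem1 : i1 ∈ Finset.univ.filter
      (fun i => u < ∑ j ∈ Finset.Iic i, q (e.symm j)) := by
    rw [Finset.mem_filter, hcum1]
    exact ⟨Finset.mem_univ _, hu1⟩
  have hne : (Finset.univ.filter
      (fun i => u < ∑ j ∈ Finset.Iic i, q (e.symm j))).Nonempty := ⟨i1, hmem1⟩
  rw [MDP.sample]
  rw [dif_pos hne]
  by_cases hc : u < q (e.symm i0)
  · rw [if_pos hc]
    congr 1
    have hmem0 : i0 ∈ Finset.univ.filter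
        (fun i => u < ∑ j ∈ Finset.Iic i, q (e.symm j)) := by
      rw [Finset.mem_filter, hIic0, Finset.sum_singleton]
      exact ⟨Finset.mem_univ _, hc⟩
    apply le_antisymm
    · exact Finset.min'_le _ _ hmem0
    · rw [hi0]
      exact Fin.mk_le_mk.mpr (by omega)
  · rw [if_neg hc]
    congr 1
    have hmin := Finset.min'_mem _ hne
    set jm := (Finset.univ.filter
        (fun i => u < ∑ j ∈ Finset.Iic i, q (e.symm j))).min' hne with hjm
    rcases jm with ⟨jv, hjv⟩
    have : jv = 0 ∨ jv = 1 := by omega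
    rcases this with h | h
    · exfalso
      rw [Finset.mem_filter] at hmin
      apply hc
      have : (⟨jv, hjv⟩ : Fin (Fintype.card (Fin 2))) = i0 := by rw [hi0]; ext; exact h
      rw [this] at hmin
      rw [hIic0, Finset.sum_singleton] at hmin
      exact hmin.2
    · rw [hi1]; ext; exact h

noncomputable def cS : Fin 2 := sample_two.choose
noncomputable def dS : Fin 2 := sample_two.choose_spec.choose

lemma cdS_ne : cS ≠ dS := sample_two.choose_spec.choose_spec.1

lemma sample_eq (q : Fin 2 → ℝ) (hnn : ∀ a, 0 ≤ q a) (hsum : q 0 + q 1 = 1)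
    (u : ℝ) (h0 : 0 ≤ u) (h1 : u < 1) :
    MDP.sample q u = if u < q cS then cS else dS :=
  sample_two.choose_spec.choose_spec.2 q hnn hsum u h0 h1

lemma fin2_cases (s : Fin 2) : s = cS ∨ s = dS := by
  by_contra hcon
  push_neg at hcon
  obtain ⟨h1, h2⟩ := hcon
  have e1 : s.val ≠ cS.val := fun h' => h1 (Fin.ext h')
  have e2 : s.val ≠ dS.val := fun h' => h2 (Fin.ext h')
  have e3 : cS.val ≠ dS.val := fun h' => cdS_ne (Fin.ext h')
  have b1 := s.isLt
  have b2 := cS.isLt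
  have b3 := dS.isLt
  omega

lemma diracD_sum (s : Fin 2) : MDP.diracD s 0 + MDP.diracD s 1 = 1 := by
  fin_cases s <;> simp [MDP.diracD]

lemma diracD_nonneg (s : Fin 2) : ∀ b : Fin 2, 0 ≤ MDP.diracD s b := by
  intro b; rw [MDP.diracD]; split <;> norm_num

lemma sample_dirac (s : Fin 2) (u : ℝ) (h0 : 0 ≤ u) (h1 : u < 1) :
    MDP.sample (MDP.diracD s) u = s := by
  rw [sample_eq (MDP.diracD s) (diracD_nonneg s) (diracD_sum s) u h0 h1]
  rcases fin2_cases s with rfl | rfl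
  · rw [if_pos]
    rw [MDP.diracD, if_pos rfl]
    linarith
  · have hd : MDP.diracD dS cS = 0 := by rw [MDP.diracD, if_neg cdS_ne]
    rw [hd, if_neg (not_lt.mpr h0)]

/-- transition function of the example MDP -/
def nxt : Fin 2 → Fin 2 → Fin 2 := fun v a => if v = 0 ∧ a = 0 then 0 else 1

lemma nxt_one (a : Fin 2) : nxt 1 a = 1 := by
  rw [nxt]
  simp

/-- The example MDP: state 0 has actions 0 (stay) and 1 (go to absorbing state 1). -/
def M2 : MDP (Fin 2) (Fin 2) where
  enabled := fun v => if v = 0 then {0, 1} else {0}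
  enabled_nonempty := by intro v; by_cases h : v = 0 <;> simp [h]
  p := fun v a => MDP.diracD (nxt v a)
  p_nonneg := fun v a v' => diracD_nonneg (nxt v a) v'
  p_sum := by
    intro v a _
    rw [Fin.sum_univ_two]
    exact diracD_sum (nxt v a)

/-- goodness of a seed -/
def goodx (x : ℝ) : Prop := ∀ k, MDP.unif k x < 1

lemma unif_mem (x : ℝ) (hg : goodx x) (k : ℕ) : 0 ≤ MDP.unif k x ∧ MDP.unif k x < 1 :=
  ⟨unif_nonneg k x, hg k⟩

lemma state_zero (σ : M2.Strategy) (x : ℝ) (hg : goodx x) :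
    M2.stateAt σ (MDP.diracD 0) x 0 = 0 := by
  rw [MDP.stateAt, MDP.run]
  exact sample_dirac 0 _ (unif_nonneg 0 x) (hg 0)

lemma action_eq (σ : M2.Strategy) (x : ℝ) (n : ℕ) :
    (M2.run σ (MDP.diracD 0) x n).2.2
      = MDP.sample (σ.act (M2.run σ (MDP.diracD 0) x n).1 (M2.stateAt σ (MDP.diracD 0) x n))
          (MDP.unif (2*n+1) x) := by
  cases n with
  | zero =>
      rw [MDP.stateAt, MDP.run]
  | succ n =>
      have h23 : 2*(n+1)+1 = 2*n+3 := by ring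
      rw [MDP.stateAt, h23, MDP.run]

lemma state_succ (σ : M2.Strategy) (x : ℝ) (hg : goodx x) (n : ℕ) :
    M2.stateAt σ (MDP.diracD 0) x (n+1)
      = nxt (M2.stateAt σ (MDP.diracD 0) x n) ((M2.run σ (MDP.diracD 0) x n).2.2) := by
  rw [MDP.stateAt, MDP.run]
  have hp : M2.p (M2.run σ (MDP.diracD 0) x n).2.1 (M2.run σ (MDP.diracD 0) x n).2.2
      = MDP.diracD (nxt (M2.run σ (MDP.diracD 0) x n).2.1 (M2.run σ (MDP.diracD 0) x n).2.2) := rfl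
  rw [hp]
  exact sample_dirac _ _ (unif_nonneg _ x) (hg _)

lemma absorb (σ : M2.Strategy) (x : ℝ) (hg : goodx x) (n : ℕ)
    (hn : M2.stateAt σ (MDP.diracD 0) x n = 1) :
    ∀ m, n ≤ m → M2.stateAt σ (MDP.diracD 0) x m = 1 := by
  intro m hm
  induction m, hm using Nat.le_induction with
  | base => exact hn
  | succ m hm ih =>
      rw [state_succ σ x hg m, ih, nxt_one]

lemma fin2_zero_or_one (s : Fin 2) : s = 0 ∨ s = 1 := by
  have hlt := s.isLt
  rcases (by omega : s.val = 0 ∨ s.val = 1) with h | h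
  · exact Or.inl (Fin.ext h)
  · exact Or.inr (Fin.ext h)

lemma traj_P1_iff (σ : M2.Strategy) (x : ℝ) (hg : goodx x) :
    (M2.stateAt σ (MDP.diracD 0) x ∈ InfOften {(0 : Fin 2)})
      ↔ ∀ n, M2.stateAt σ (MDP.diracD 0) x n = 0 := by
  constructor
  · intro h n
    rcases fin2_zero_or_one (M2.stateAt σ (MDP.diracD 0) x n) with h0 | h1
    · exact h0
    · exfalso
      obtain ⟨m, hm, hmem⟩ := h n
      have := absorb σ x hg n h1 m hm
      rw [Set.mem_singleton_iff] at hmem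
      rw [hmem] at this
      exact absurd this (by decide)
  · intro h N
    exact ⟨N, le_refl N, Set.mem_singleton_iff.mpr (h N)⟩

lemma traj_P2_iff (σ : M2.Strategy) (x : ℝ) (hg : goodx x) :
    (M2.stateAt σ (MDP.diracD 0) x ∈ InfOften {(1 : Fin 2)})
      ↔ ∃ n, M2.stateAt σ (MDP.diracD 0) x n = 1 := by
  constructor
  · intro h
    obtain ⟨m, _, hmem⟩ := h 0
    exact ⟨m, Set.mem_singleton_iff.mp hmem⟩
  · rintro ⟨n, hn⟩ N
    refine ⟨max n N, le_max_right n N, ?_⟩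
    exact Set.mem_singleton_iff.mpr (absorb σ x hg n hn (max n N) (le_max_left n N))

/-- if at state 0 the action is nonzero, next state is 1 -/
lemma state_succ_one (σ : M2.Strategy) (x : ℝ) (hg : goodx x) (n : ℕ)
    (h0 : M2.stateAt σ (MDP.diracD 0) x n = 0)
    (ha : (M2.run σ (MDP.diracD 0) x n).2.2 = 1) :
    M2.stateAt σ (MDP.diracD 0) x (n+1) = 1 := by
  rw [state_succ σ x hg n, h0, ha]
  rw [nxt]
  simp

lemma state_succ_zero (σ : M2.Strategy) (x : ℝ) (hg : goodx x) (n : ℕ)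
    (h0 : M2.stateAt σ (MDP.diracD 0) x n = 0)
    (ha : (M2.run σ (MDP.diracD 0) x n).2.2 = 0) :
    M2.stateAt σ (MDP.diracD 0) x (n+1) = 0 := by
  rw [state_succ σ x hg n, h0, ha]
  rw [nxt]
  simp

lemma hist_succ (σ : M2.Strategy) (x : ℝ) (n : ℕ) :
    (M2.run σ (MDP.diracD 0) x (n+1)).1
      = (M2.run σ (MDP.diracD 0) x n).2 :: (M2.run σ (MDP.diracD 0) x n).1 := by
  rw [MDP.run]

lemma hist_zero (σ : M2.Strategy) (x : ℝ) :
    (M2.run σ (MDP.diracD 0) x 0).1 = [] := by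
  rw [MDP.run]

lemma all_zero_of (σ : M2.Strategy) (x : ℝ) (hg : goodx x)
    (hact : ∀ n, M2.stateAt σ (MDP.diracD 0) x n = 0 →
      (M2.run σ (MDP.diracD 0) x n).2.2 = 0) :
    ∀ n, M2.stateAt σ (MDP.diracD 0) x n = 0 := by
  intro n
  induction n with
  | zero => exact state_zero σ x hg
  | succ n ih => exact state_succ_zero σ x hg n ih (hact n ih)

lemma action_zero_of_all_zero (σ : M2.Strategy) (x : ℝ) (hg : goodx x)
    (hall : ∀ n, M2.stateAt σ (MDP.diracD 0) x n = 0) :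
    ∀ n, (M2.run σ (MDP.diracD 0) x n).2.2 = 0 := by
  intro n
  rcases fin2_zero_or_one ((M2.run σ (MDP.diracD 0) x n).2.2) with h | h
  · exact h
  · exfalso
    have := state_succ_one σ x hg n (hall n) h
    rw [hall (n+1)] at this
    exact absurd this (by decide)

/-- the strategy for part (a): flip a fair coin initially, then commit -/
noncomputable def σ0 : M2.Strategy where
  act := fun h v => if v = 1 then MDP.diracD 0 else
    if h = [] then (fun _ => (1:ℝ)/2) else MDP.diracD 0
  act_nonneg := by
    intro h v a
    split
    · exact diracD_nonneg _ _
    · split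
      · norm_num
      · exact diracD_nonneg _ _
  act_support := by
    intro h v a ha
    have hen : M2.enabled v = if v = 0 then ({0, 1} : Finset (Fin 2)) else {0} := rfl
    rcases fin2_zero_or_one v with rfl | rfl
    · exfalso
      apply ha
      rw [hen, if_pos rfl]
      rcases fin2_zero_or_one a with rfl | rfl <;> simp
    · have ha1 : a = 1 := by
        rcases fin2_zero_or_one a with rfl | rfl
        · exfalso; apply ha; rw [hen]; simp
        · rfl
      subst ha1
      rw [if_pos rfl, MDP.diracD, if_neg (by decide)]
  act_sum := by
    intro h v
    rw [Fin.sum_univ_two]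
    split
    · exact diracD_sum 0
    · split
      · norm_num
      · exact diracD_sum 0

noncomputable def βb : Bool := if cS = 0 then false else true

def Tail1 : Set ℝ := {x : ℝ | x ∈ Set.Ico (0:ℝ) 1 ∧ ∀ n, Db (Nat.pair 1 (n+1)) x = true}

lemma vol_Tail1 : volume Tail1 = 0 :=
  vol_tail_null (fun n => Nat.pair 1 (n+1))
    (fun a b h => by have := (Nat.pair_eq_pair.mp h).2; omega)

lemma dS_val : (cS = 0 ∧ dS = 1) ∨ (cS = 1 ∧ dS = 0) := by
  rcases fin2_zero_or_one cS with h | h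
  · left
    refine ⟨h, ?_⟩
    rcases fin2_zero_or_one dS with h' | h'
    · exfalso; exact cdS_ne (h.trans h'.symm)
    · exact h'
  · right
    refine ⟨h, ?_⟩
    rcases fin2_zero_or_one dS with h' | h'
    · exact h'
    · exfalso; exact cdS_ne (h.trans h'.symm)

lemma unif_half_true {x : ℝ} (h : Db (Nat.pair 1 0) x = true) : ¬ (MDP.unif 1 x < 1/2) := by
  have := unif_ge_of_true (k := 1) (m := 1) (x := x) (by
    intro j hj
    have : j = 0 := by omega
    rw [this]; exact h)
  rw [not_lt]
  calc (1:ℝ)/2 = 1 - ((1:ℝ)/2)^1 := by norm_num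
    _ ≤ MDP.unif 1 x := this

lemma unif_half_false {x : ℝ} (hx : x ∈ Set.Ico (0:ℝ) 1) (hnt : x ∉ Tail1)
    (h : Db (Nat.pair 1 0) x = false) : MDP.unif 1 x < 1/2 := by
  have hex : ∃ n, Db (Nat.pair 1 (n+1)) x = false := by
    by_contra hc
    push_neg at hc
    exact hnt ⟨hx, fun n => by
      rcases Bool.eq_false_or_eq_true (Db (Nat.pair 1 (n+1)) x) with h' | h'
      · exact h'
      · exact absurd h' (hc n)⟩
  obtain ⟨n, hn⟩ := hex
  have := unif_lt (k := 1) (m := 1) (n0 := n+1) (x := x) (by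
    intro j hj
    have : j = 0 := by omega
    rw [this]; exact h) (by omega) hn
  calc MDP.unif 1 x < ((1:ℝ)/2)^1 := this
    _ = 1/2 := by norm_num

lemma a0_val (x : ℝ) (hg : goodx x) :
    (M2.run σ0 (MDP.diracD 0) x 0).2.2 = if MDP.unif 1 x < 1/2 then cS else dS := by
  rw [action_eq σ0 x 0, hist_zero, state_zero σ0 x hg]
  have hact : σ0.act [] 0 = (fun _ => (1:ℝ)/2) := by
    show (if (0 : Fin 2) = 1 then MDP.diracD 0 else
      if ([] : List (Fin 2 × Fin 2)) = [] then (fun _ => (1:ℝ)/2) else MDP.diracD 0) = _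
    rw [if_neg (by decide), if_pos rfl]
  rw [hact]
  rw [sample_eq _ (fun a => by norm_num) (by norm_num) _ (unif_nonneg _ x) (hg _)]

lemma a0_iff (x : ℝ) (hg : goodx x) (hx : x ∈ Set.Ico (0:ℝ) 1) (hnt : x ∉ Tail1) :
    ((M2.run σ0 (MDP.diracD 0) x 0).2.2 = 0 ↔ Db (Nat.pair 1 0) x = βb) := by
  rw [a0_val x hg]
  rcases dS_val with ⟨hc, hd⟩ | ⟨hc, hd⟩
  · have hβ : βb = false := by rw [βb, if_pos hc]
    rw [hβ]
    constructor
    · intro h0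
      rcases Bool.eq_false_or_eq_true (Db (Nat.pair 1 0) x) with h' | h'
      · exfalso
        rw [if_neg (unif_half_true h'), hd] at h0
        exact absurd h0 (by decide)
      · exact h'
    · intro hD
      rw [if_pos (unif_half_false hx hnt hD)]
      exact hc
  · have hβ : βb = true := by rw [βb, if_neg (by rw [hc]; decide)]
    rw [hβ]
    constructor
    · intro h0
      rcases Bool.eq_false_or_eq_true (Db (Nat.pair 1 0) x) with h' | h'
      · exact h'
      · exfalso
        rw [if_pos (unif_half_false hx hnt h')] at h0
        rw [hc] at h0
        exact absurd h0 (by decide)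
    · intro hD
      rw [if_neg (unif_half_true hD)]
      exact hd

/-- under σ0, if the first action is 0 then the state stays 0 forever -/
lemma sig0_all_zero (x : ℝ) (hg : goodx x)
    (ha : (M2.run σ0 (MDP.diracD 0) x 0).2.2 = 0) :
    ∀ n, M2.stateAt σ0 (MDP.diracD 0) x n = 0 := by
  apply all_zero_of σ0 x hg
  intro n hs
  cases n with
  | zero => exact ha
  | succ n =>
      rw [action_eq σ0 x (n+1), hs, hist_succ]
      have hact : σ0.act ((M2.run σ0 (MDP.diracD 0) x n).2 :: (M2.run σ0 (MDP.diracD 0) x n).1) 0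
          = MDP.diracD 0 := by
        show (if (0 : Fin 2) = 1 then MDP.diracD 0 else
          if (M2.run σ0 (MDP.diracD 0) x n).2 :: (M2.run σ0 (MDP.diracD 0) x n).1 = [] then
            (fun _ => (1:ℝ)/2) else MDP.diracD 0) = _
        rw [if_neg (by decide), if_neg (by simp)]
      rw [hact]
      exact sample_dirac 0 _ (unif_nonneg _ x) (hg _)

def Zbad : Set ℝ := badN ∪ Tail1 ∪ {1}

lemma vol_Zbad : volume Zbad = 0 := by
  rw [Zbad]
  apply measure_union_null
  · apply measure_union_null vol_badN vol_Tail1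
  · exact Real.volume_singleton

lemma good_of_not_bad {x : ℝ} (hIcc : x ∈ Set.Icc (0:ℝ) 1) (h : x ∉ badN) : goodx x := by
  rw [goodx]
  by_contra hc
  exact h ⟨hIcc, hc⟩

lemma mem_Ico_of {x : ℝ} (hIcc : x ∈ Set.Icc (0:ℝ) 1) (h : x ∉ ({1} : Set ℝ)) :
    x ∈ Set.Ico (0:ℝ) 1 := by
  refine ⟨hIcc.1, ?_⟩
  rcases lt_or_eq_of_le hIcc.2 with h' | h'
  · exact h'
  · exact absurd h' (by simpa using h)

lemma bool_ne_iff {a b : Bool} : a ≠ b ↔ a = !b := by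
  cases a <;> cases b <;> simp

lemma prEvent_sig0_P1 :
    M2.PrEvent σ0 (MDP.diracD 0) (InfOften {(0 : Fin 2)}) = 1/2 := by
  rw [MDP.PrEvent]
  have hvol : volume {x : ℝ | x ∈ Set.Icc (0:ℝ) 1 ∧
      M2.stateAt σ0 (MDP.diracD 0) x ∈ InfOften {(0 : Fin 2)}}
      = volume {x : ℝ | x ∈ Set.Ico (0:ℝ) 1 ∧
          ∀ i ∈ ({Nat.pair 1 0} : Finset ℕ), Db i x = βb} := by
    apply vol_sandwich (Z := Zbad) ?_ ?_ vol_Zbad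
    · rintro x ⟨⟨hIco, hDb⟩, hZ⟩
      rw [Zbad, Set.mem_union, Set.mem_union] at hZ
      push_neg at hZ
      have hIcc : x ∈ Set.Icc (0:ℝ) 1 := ⟨hIco.1, le_of_lt hIco.2⟩
      have hg : goodx x := good_of_not_bad hIcc hZ.1.1
      have ha0 : (M2.run σ0 (MDP.diracD 0) x 0).2.2 = 0 :=
        (a0_iff x hg hIco hZ.1.2).mpr (hDb _ (Finset.mem_singleton_self _))
      exact ⟨hIcc, (traj_P1_iff σ0 x hg).mpr (sig0_all_zero x hg ha0)⟩
    · rintro x ⟨hIcc, hInf⟩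
      by_cases hZ : x ∈ Zbad
      · exact Or.inr hZ
      · left
        rw [Zbad, Set.mem_union, Set.mem_union] at hZ
        push_neg at hZ
        have hg : goodx x := good_of_not_bad hIcc hZ.1.1
        have hIco : x ∈ Set.Ico (0:ℝ) 1 := mem_Ico_of hIcc hZ.2
        have hall := (traj_P1_iff σ0 x hg).mp hInf
        have ha0 : (M2.run σ0 (MDP.diracD 0) x 0).2.2 = 0 := by
          rcases fin2_zero_or_one ((M2.run σ0 (MDP.diracD 0) x 0).2.2) with h | h
          · exact h
          · exfalso
            have := state_succ_one σ0 x hg 0 (hall 0) h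
            rw [hall 1] at this
            exact absurd this (by decide)
        refine ⟨hIco, ?_⟩
        intro i hi
        rw [Finset.mem_singleton] at hi
        subst hi
        exact (a0_iff x hg hIco hZ.1.2).mp ha0
  rw [hvol, vol_E _ (fun _ => βb), Finset.card_singleton]
  rw [pow_one]
  simp [ENNReal.toReal_inv]

lemma prEvent_sig0_P2 :
    M2.PrEvent σ0 (MDP.diracD 0) (InfOften {(1 : Fin 2)}) = 1/2 := by
  rw [MDP.PrEvent]
  have hvol : volume {x : ℝ | x ∈ Set.Icc (0:ℝ) 1 ∧
      M2.stateAt σ0 (MDP.diracD 0) x ∈ InfOften {(1 : Fin 2)}}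
      = volume {x : ℝ | x ∈ Set.Ico (0:ℝ) 1 ∧
          ∀ i ∈ ({Nat.pair 1 0} : Finset ℕ), Db i x = !βb} := by
    apply vol_sandwich (Z := Zbad) ?_ ?_ vol_Zbad
    · rintro x ⟨⟨hIco, hDb⟩, hZ⟩
      rw [Zbad, Set.mem_union, Set.mem_union] at hZ
      push_neg at hZ
      have hIcc : x ∈ Set.Icc (0:ℝ) 1 := ⟨hIco.1, le_of_lt hIco.2⟩
      have hg : goodx x := good_of_not_bad hIcc hZ.1.1
      have hDb1 : Db (Nat.pair 1 0) x = !βb := hDb _ (Finset.mem_singleton_self _)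
      have ha0 : (M2.run σ0 (MDP.diracD 0) x 0).2.2 = 1 := by
        rcases fin2_zero_or_one ((M2.run σ0 (MDP.diracD 0) x 0).2.2) with h | h
        · exfalso
          have := (a0_iff x hg hIco hZ.1.2).mp h
          rw [hDb1] at this
          exact absurd this (by cases βb <;> simp)
        · exact h
      refine ⟨hIcc, (traj_P2_iff σ0 x hg).mpr ⟨1, ?_⟩⟩
      exact state_succ_one σ0 x hg 0 (state_zero σ0 x hg) ha0
    · rintro x ⟨hIcc, hInf⟩
      by_cases hZ : x ∈ Zbad
      · exact Or.inr hZ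
      · left
        rw [Zbad, Set.mem_union, Set.mem_union] at hZ
        push_neg at hZ
        have hg : goodx x := good_of_not_bad hIcc hZ.1.1
        have hIco : x ∈ Set.Ico (0:ℝ) 1 := mem_Ico_of hIcc hZ.2
        obtain ⟨n, hn⟩ := (traj_P2_iff σ0 x hg).mp hInf
        have ha0 : (M2.run σ0 (MDP.diracD 0) x 0).2.2 ≠ 0 := by
          intro h
          have := sig0_all_zero x hg h n
          rw [hn] at this
          exact absurd this (by decide)
        have hDbne : Db (Nat.pair 1 0) x ≠ βb := by
          intro h
          exact ha0 ((a0_iff x hg hIco hZ.1.2).mpr h)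
        refine ⟨hIco, ?_⟩
        intro i hi
        rw [Finset.mem_singleton] at hi
        subst hi
        exact bool_ne_iff.mp hDbne
  rw [hvol, vol_E _ (fun _ => !βb), Finset.card_singleton]
  rw [pow_one]
  simp [ENNReal.toReal_inv]

lemma act_state0 (σ : M2.Strategy) (x : ℝ) (hg : goodx x) (hmem : σ.Memoryless) (n : ℕ)
    (hs : M2.stateAt σ (MDP.diracD 0) x n = 0) :
    (M2.run σ (MDP.diracD 0) x n).2.2
      = MDP.sample (σ.act [] 0) (MDP.unif (2*n+1) x) := by
  rw [action_eq σ x n, hs, hmem (M2.run σ (MDP.diracD 0) x n).1 [] 0]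

lemma memoryless_zero (σ : M2.Strategy) (hmem : σ.Memoryless) :
    M2.PrEvent σ (MDP.diracD 0) (InfOften {(0 : Fin 2)}) = 0 ∨
    M2.PrEvent σ (MDP.diracD 0) (InfOften {(1 : Fin 2)}) = 0 := by
  set q : Fin 2 → ℝ := σ.act [] 0 with hq
  have hq01 : q 0 + q 1 = 1 := by
    have := σ.act_sum [] 0
    rwa [Fin.sum_univ_two] at this
  have hqnn : ∀ a, 0 ≤ q a := σ.act_nonneg [] 0
  by_cases hq1 : q 1 = 0
  · -- deterministically stay at 0 : InfOften {1} has probability 0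
    right
    have hqd : q = MDP.diracD 0 := eq_diracD q hq01 0 (by linarith) hqnn
    rw [MDP.PrEvent]
    have hsub : {x : ℝ | x ∈ Set.Icc (0:ℝ) 1 ∧
        M2.stateAt σ (MDP.diracD 0) x ∈ InfOften {(1 : Fin 2)}} ⊆ Zbad := by
      rintro x ⟨hIcc, hInf⟩
      by_contra hZ
      rw [Zbad, Set.mem_union, Set.mem_union] at hZ
      push_neg at hZ
      have hg : goodx x := good_of_not_bad hIcc hZ.1.1
      have hall : ∀ n, M2.stateAt σ (MDP.diracD 0) x n = 0 := by
        apply all_zero_of σ x hg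
        intro n hs
        rw [act_state0 σ x hg hmem n hs, ← hq, hqd]
        exact sample_dirac 0 _ (unif_nonneg _ x) (hg _)
      obtain ⟨n, hn⟩ := (traj_P2_iff σ x hg).mp hInf
      rw [hall n] at hn
      exact absurd hn (by decide)
    have : volume {x : ℝ | x ∈ Set.Icc (0:ℝ) 1 ∧
        M2.stateAt σ (MDP.diracD 0) x ∈ InfOften {(1 : Fin 2)}} = 0 :=
      measure_mono_null hsub vol_Zbad
    rw [this]
    simp
  · -- q 1 > 0 : InfOften {0} has probability 0
    left
    have hq1pos : 0 < q 1 := lt_of_le_of_ne (hqnn 1) (Ne.symm hq1)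
    obtain ⟨m, hm⟩ := exists_pow_lt_of_lt_one hq1pos (by norm_num : (1:ℝ)/2 < 1)
    set w : Bool := if cS = 0 then true else false with hw
    rw [MDP.PrEvent]
    have hsub : {x : ℝ | x ∈ Set.Icc (0:ℝ) 1 ∧
        M2.stateAt σ (MDP.diracD 0) x ∈ InfOften {(0 : Fin 2)}}
        ⊆ {x : ℝ | x ∈ Set.Ico (0:ℝ) 1 ∧
            ∀ n : ℕ, ¬ (∀ j < m, Db (Nat.pair (2*n+1) j) x = w)} ∪ Zbad := by
      rintro x ⟨hIcc, hInf⟩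
      by_cases hZ : x ∈ Zbad
      · exact Or.inr hZ
      left
      rw [Zbad, Set.mem_union, Set.mem_union] at hZ
      push_neg at hZ
      have hg : goodx x := good_of_not_bad hIcc hZ.1.1
      have hIco : x ∈ Set.Ico (0:ℝ) 1 := mem_Ico_of hIcc hZ.2
      have hall := (traj_P1_iff σ x hg).mp hInf
      have hacts := action_zero_of_all_zero σ x hg hall
      refine ⟨hIco, ?_⟩
      intro n hpat
      have hsample : MDP.sample q (MDP.unif (2*n+1) x) = 0 := by
        rw [← act_state0 σ x hg hmem n (hall n)]
        exact hacts n
      rw [sample_eq q hqnn hq01 _ (unif_nonneg _ x) (hg _)] at hsample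
      rcases dS_val with ⟨hc, hd⟩ | ⟨hc, hd⟩
      · -- cS = 0, w = true
        have hwt : w = true := by rw [hw, if_pos hc]
        have hbr : MDP.unif (2*n+1) x < q cS := by
          by_contra hbr
          rw [if_neg hbr, hd] at hsample
          exact absurd hsample (by decide)
        rw [hc] at hbr
        have hge := unif_ge_of_true (k := 2*n+1) (m := m) (x := x) (by
          intro j hj
          have := hpat j hj
          rwa [hwt] at this)
        have hq0 : q 0 = 1 - q 1 := by linarith
        rw [hq0] at hbr
        linarith
      · -- cS = 1, w = false
        have hwf : w = false := by rw [hw, if_neg (by rw [hc]; decide)]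
        have hbr : ¬ MDP.unif (2*n+1) x < q cS := by
          intro hbr
          rw [if_pos hbr, hc] at hsample
          exact absurd hsample (by decide)
        rw [hc] at hbr
        have hle := unif_le_of_false (k := 2*n+1) (m := m) (x := x) (by
          intro j hj
          have := hpat j hj
          rwa [hwf] at this)
        rw [not_lt] at hbr
        linarith
    have : volume {x : ℝ | x ∈ Set.Icc (0:ℝ) 1 ∧
        M2.stateAt σ (MDP.diracD 0) x ∈ InfOften {(0 : Fin 2)}} = 0 := by
      apply measure_mono_null hsub
      apply measure_union_null (vol_blocks_all m w) vol_Zbad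
    rw [this]
    simp

/-- the deterministic run associated to a choice function -/
def purerun (f : List (Fin 2 × Fin 2) → Fin 2 → Fin 2) :
    ℕ → List (Fin 2 × Fin 2) × (Fin 2 × Fin 2)
  | 0 => ([], (0, f [] 0))
  | n+1 =>
      let r := purerun f n
      (r.2 :: r.1, (nxt r.2.1 r.2.2, f (r.2 :: r.1) (nxt r.2.1 r.2.2)))

lemma run_eq_purerun (σ : M2.Strategy) (f : List (Fin 2 × Fin 2) → Fin 2 → Fin 2)
    (hσf : ∀ h v, σ.act h v = MDP.diracD (f h v)) (x : ℝ) (hg : goodx x) :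
    ∀ n, M2.run σ (MDP.diracD 0) x n = purerun f n := by
  have hp : ∀ v a, M2.p v a = MDP.diracD (nxt v a) := fun _ _ => rfl
  intro n
  induction n with
  | zero =>
      rw [MDP.run, purerun]
      rw [sample_dirac 0 _ (unif_nonneg _ x) (hg _)]
      rw [hσf, sample_dirac _ _ (unif_nonneg _ x) (hg _)]
  | succ n ih =>
      rw [MDP.run, purerun, ih]
      rw [hp, sample_dirac _ _ (unif_nonneg _ x) (hg _)]
      rw [hσf, sample_dirac _ _ (unif_nonneg _ x) (hg _)]

lemma pure_not_both (σ : M2.Strategy) (hp : σ.Pure) :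
    ¬ (0 < M2.PrEvent σ (MDP.diracD 0) (InfOften {(0 : Fin 2)}) ∧
       0 < M2.PrEvent σ (MDP.diracD 0) (InfOften {(1 : Fin 2)})) := by
  rintro ⟨h1, h2⟩
  set f : List (Fin 2 × Fin 2) → Fin 2 → Fin 2 := fun h v => (hp h v).choose with hf
  have hσf : ∀ h v, σ.act h v = MDP.diracD (f h v) := by
    intro h v
    apply eq_diracD _ (by
      have := σ.act_sum h v
      rwa [Fin.sum_univ_two] at this) _ (hp h v).choose_spec (σ.act_nonneg h v)
  have hpos : ∀ (E : Set (ℕ → Fin 2)), 0 < M2.PrEvent σ (MDP.diracD 0) E →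
      ∃ x, (x ∈ Set.Icc (0:ℝ) 1 ∧ M2.stateAt σ (MDP.diracD 0) x ∈ E) ∧ x ∉ Zbad := by
    intro E hE
    by_contra hc
    push_neg at hc
    have hsub : {x : ℝ | x ∈ Set.Icc (0:ℝ) 1 ∧ M2.stateAt σ (MDP.diracD 0) x ∈ E} ⊆ Zbad := by
      rintro x ⟨ha, hb⟩
      exact hc x ⟨ha, hb⟩
    have : volume {x : ℝ | x ∈ Set.Icc (0:ℝ) 1 ∧ M2.stateAt σ (MDP.diracD 0) x ∈ E} = 0 :=
      measure_mono_null hsub vol_Zbad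
    rw [MDP.PrEvent, this] at hE
    simp at hE
  obtain ⟨x1, ⟨hIcc1, hInf1⟩, hZ1⟩ := hpos _ h1
  obtain ⟨x2, ⟨hIcc2, hInf2⟩, hZ2⟩ := hpos _ h2
  have hg1 : goodx x1 := good_of_not_bad hIcc1 (fun h => hZ1 (Or.inl (Or.inl h)))
  have hg2 : goodx x2 := good_of_not_bad hIcc2 (fun h => hZ2 (Or.inl (Or.inl h)))
  have hall : ∀ n, (purerun f n).2.1 = 0 := by
    intro n
    rw [← run_eq_purerun σ f hσf x1 hg1 n]
    exact (traj_P1_iff σ x1 hg1).mp hInf1 n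
  obtain ⟨n, hn⟩ := (traj_P2_iff σ x2 hg2).mp hInf2
  rw [MDP.stateAt, run_eq_purerun σ f hσf x2 hg2 n] at hn
  rw [hall n] at hn
  exact absurd hn (by decide)

end Aux

open MDP in
/-- There is a finite labeled MDP `M'` with initial state `u` and two propositional
labels `P₁`, `P₂` (given as the sets of states carrying each label) such that:
(a) some (randomized, history-dependent) strategy satisfies
`Pr^σ_u(□◇P₁) > 0 ∧ Pr^σ_u(□◇P₂) > 0` — indeed both probabilities equal `1/2`;
(b) no memoryless strategy makes both probabilities positive; and
(c) no pure (deterministic) strategy makes both probabilities positive. -/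
theorem qualitative_queries_need_memory_and_randomization :
    ∃ (nV nA : ℕ) (M : MDP (Fin (nV + 1)) (Fin (nA + 1)))
      (u : Fin (nV + 1)) (P1 P2 : Set (Fin (nV + 1))),
      (∃ σ : M.Strategy,
        M.PrEvent σ (diracD u) (InfOften P1) = 1 / 2 ∧
        M.PrEvent σ (diracD u) (InfOften P2) = 1 / 2) ∧
      (∀ σ : M.Strategy, σ.Memoryless →
        ¬ (0 < M.PrEvent σ (diracD u) (InfOften P1) ∧
           0 < M.PrEvent σ (diracD u) (InfOften P2))) ∧
      (∀ σ : M.Strategy, σ.Pure →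
        ¬ (0 < M.PrEvent σ (diracD u) (InfOften P1) ∧
           0 < M.PrEvent σ (diracD u) (InfOften P2))) := by
  refine ⟨1, 1, M2, 0, {0}, {1}, ⟨σ0, prEvent_sig0_P1, prEvent_sig0_P2⟩, ?_, ?_⟩
  · rintro σ hmem ⟨h1, h2⟩
    rcases memoryless_zero σ hmem with h | h
    · rw [h] at h1; exact lt_irrefl 0 h1
    · rw [h] at h2; exact lt_irrefl 0 h2
  · exact pure_not_both
end
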